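/- arXiv:2204.06759 — 7 statements merged into one kernel-verified Lean document; each statement's English description precedes it below -/
import Mathlib

section
/- Let n, p, q be natural numbers with q ≥ 2, let b : Fin n → Fin p be a block assignment map, and let c : Fin p → Fin q be any map that merges the blocks of b into the coarser blocks of c ∘ b. If a real symmetric n×n matrix A belongs to FW_b, then A belongs to FW_{c∘b}; that is, the cone of block factor-width-two matrices grows as the partition becomes coarser. -/
open Matrix Finset

/-- `A` is block factor-width-two w.r.t. the block assignment map `b`:
`A = ∑_{k<l} Q k l` with each `Q k l` positive semidefinite and supported on blocks `k`, `l`. -/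
def memFW {n p : ℕ} (b : Fin n → Fin p) (A : Matrix (Fin n) (Fin n) ℝ) : Prop :=
  ∃ Q : Fin p → Fin p → Matrix (Fin n) (Fin n) ℝ,
    (∀ k l : Fin p, k < l → (Q k l).PosSemidef) ∧
    (∀ k l : Fin p, k < l → ∀ i j : Fin n,
      (b i ≠ k ∧ b i ≠ l) ∨ (b j ≠ k ∧ b j ≠ l) → Q k l i j = 0) ∧
    A = ∑ k : Fin p, ∑ l ∈ Finset.Ioi k, Q k l

/-- The cone `FW_b(V) = { Vᵀ Q V : Q ∈ FW_b }`. -/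
def memFWV {n p : ℕ} (b : Fin n → Fin p) (V M : Matrix (Fin n) (Fin n) ℝ) : Prop :=
  ∃ Q, memFW b Q ∧ M = Vᵀ * Q * V

/-- Assign to a (possibly equal) pair of coarse blocks an ordered pair of distinct blocks
containing it. -/
private def gmap {q : ℕ} (hq : 2 ≤ q) (a d : Fin q) : Fin q × Fin q :=
  if a < d then (a, d) else if d < a then (d, a)
  else if a = ⟨0, by omega⟩ then (⟨0, by omega⟩, ⟨1, by omega⟩) else (⟨0, by omega⟩, a)

private lemma psd_sum {n : ℕ} {ι : Type*} (s : Finset ι) (f : ι → Matrix (Fin n) (Fin n) ℝ)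
    (hf : ∀ i ∈ s, (f i).PosSemidef) : (∑ i ∈ s, f i).PosSemidef := by
  classical
  induction s using Finset.induction with
  | empty => simpa using Matrix.PosSemidef.zero
  | insert _ _ hx ih =>
    rw [Finset.sum_insert hx]
    exact (hf _ (Finset.mem_insert_self _ _)).add (ih fun i hi => hf i (Finset.mem_insert_of_mem hi))

private lemma gmap_lt {q : ℕ} (hq : 2 ≤ q) (a d : Fin q) : (gmap hq a d).1 < (gmap hq a d).2 := by
  unfold gmap
  split_ifs with h1 h2 h3
  · exact h1
  · exact h2
  · simp [Fin.lt_def]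
  · have : a.val ≠ 0 := fun hh => h3 (Fin.ext hh)
    simp only [Fin.lt_def]; omega

private lemma gmap_mem {q : ℕ} (hq : 2 ≤ q) (a d : Fin q) :
    (a = (gmap hq a d).1 ∨ a = (gmap hq a d).2) ∧
    (d = (gmap hq a d).1 ∨ d = (gmap hq a d).2) := by
  unfold gmap
  split_ifs with h1 h2 h3
  · simp
  · simp
  · have had : a = d := le_antisymm (not_lt.1 h2) (not_lt.1 h1)
    subst had; subst h3; simp
  · have had : a = d := le_antisymm (not_lt.1 h2) (not_lt.1 h1)
    subst had; simp

theorem memFW_coarser {n p q : ℕ} (hq : 2 ≤ q) (b : Fin n → Fin p) (c : Fin p → Fin q)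
    (A : Matrix (Fin n) (Fin n) ℝ) (hA : A.IsSymm) (h : memFW b A) :
    memFW (c ∘ b) A := by
  obtain ⟨Q, hpsd, hsupp, hsum⟩ := h
  refine ⟨fun k' l' => ∑ k : Fin p, ∑ l ∈ Finset.Ioi k,
      (if gmap hq (c k) (c l) = (k', l') then Q k l else 0), ?_, ?_, ?_⟩
  · intro k' l' _
    apply psd_sum
    intro k _
    apply psd_sum
    intro l hl
    split_ifs with hgl
    · exact hpsd k l (Finset.mem_Ioi.1 hl)
    · exact Matrix.PosSemidef.zero
  · intro k' l' _ i j hij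
    simp only [Matrix.sum_apply]
    apply Finset.sum_eq_zero; intro k _
    apply Finset.sum_eq_zero; intro l hl
    by_cases hgl : gmap hq (c k) (c l) = (k', l')
    · simp only [hgl, if_pos rfl]
      apply hsupp k l (Finset.mem_Ioi.1 hl) i j
      have m1 := (gmap_mem hq (c k) (c l)).1
      have m2 := (gmap_mem hq (c k) (c l)).2
      rw [hgl] at m1 m2
      dsimp only at m1 m2
      rcases hij with ⟨h1, h2⟩ | ⟨h1, h2⟩
      · left
        constructor
        · intro hk
          simp only [Function.comp, hk] at h1 h2
          rcases m1 with hh | hh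
          · exact absurd hh h1
          · exact absurd hh h2
        · intro hk
          simp only [Function.comp, hk] at h1 h2
          rcases m2 with hh | hh
          · exact absurd hh h1
          · exact absurd hh h2
      · right
        constructor
        · intro hk
          simp only [Function.comp, hk] at h1 h2
          rcases m1 with hh | hh
          · exact absurd hh h1
          · exact absurd hh h2
        · intro hk
          simp only [Function.comp, hk] at h1 h2
          rcases m2 with hh | hh
          · exact absurd hh h1
          · exact absurd hh h2
    · simp [hgl]
  · rw [hsum]
    have key : ∀ (t : Fin q × Fin q), t.1 < t.2 → ∀ X : Matrix (Fin n) (Fin n) ℝ,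
        ∑ k' : Fin q, ∑ l' ∈ Finset.Ioi k', (if t = (k', l') then X else 0) = X := by
      intro t ht X
      rw [Finset.sum_eq_single_of_mem t.1 (Finset.mem_univ _)]
      · rw [Finset.sum_eq_single_of_mem t.2 (Finset.mem_Ioi.2 ht)]
        · simp
        · intro l' _ hne
          rw [if_neg]; intro hh; exact hne (congrArg Prod.snd hh).symm
      · intro k' _ hne
        apply Finset.sum_eq_zero; intro l' _
        rw [if_neg]; intro hh; exact hne (congrArg Prod.fst hh).symm
    have swap : ∑ k' : Fin q, ∑ l' ∈ Finset.Ioi k', ∑ k : Fin p, ∑ l ∈ Finset.Ioi k,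
          (if gmap hq (c k) (c l) = (k', l') then Q k l else 0)
        = ∑ k : Fin p, ∑ l ∈ Finset.Ioi k, ∑ k' : Fin q, ∑ l' ∈ Finset.Ioi k',
          (if gmap hq (c k) (c l) = (k', l') then Q k l else 0) := by
      trans (∑ k' : Fin q, ∑ k : Fin p, ∑ l' ∈ Finset.Ioi k', ∑ l ∈ Finset.Ioi k,
          (if gmap hq (c k) (c l) = (k', l') then Q k l else 0))
      · exact Finset.sum_congr rfl fun k' _ => Finset.sum_comm
      trans (∑ k : Fin p, ∑ k' : Fin q, ∑ l' ∈ Finset.Ioi k', ∑ l ∈ Finset.Ioi k,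
          (if gmap hq (c k) (c l) = (k', l') then Q k l else 0))
      · exact Finset.sum_comm
      apply Finset.sum_congr rfl; intro k _
      trans (∑ k' : Fin q, ∑ l ∈ Finset.Ioi k, ∑ l' ∈ Finset.Ioi k',
          (if gmap hq (c k) (c l) = (k', l') then Q k l else 0))
      · exact Finset.sum_congr rfl fun k' _ => Finset.sum_comm
      · exact Finset.sum_comm
    rw [swap]
    apply Finset.sum_congr rfl; intro k _
    apply Finset.sum_congr rfl; intro l _
    exact (key _ (gmap_lt hq (c k) (c l)) (Q k l)).symm
end

section
/- Let n ≥ 2 and let A be a real symmetric n×n matrix that can be written as A = Σ_{1≤i<j≤n} Q_{ij}, where each Q_{ij} is an n×n positive semidefinite matrix whose entries vanish outside the 2×2 principal submatrix indexed by {i, j}. Then A is scaled diagonally dominant: there exists a diagonal matrix D with strictly positive diagonal entries such that DAD is diagonally dominant with nonnegative diagonal. (Together with the converse inclusion, this gives the equivalence between SDD matrices and factor-width-two matrices used in the paper.) -/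
open Matrix Finset

/-- `M` is diagonally dominant with nonnegative diagonal. -/
def IsDD {n : ℕ} (M : Matrix (Fin n) (Fin n) ℝ) : Prop :=
  ∀ i : Fin n, ∑ j ∈ Finset.univ.erase i, |M i j| ≤ M i i

/-- `A` is scaled diagonally dominant: `DAD` is DD for some positive diagonal `D`. -/
def IsSDD {n : ℕ} (A : Matrix (Fin n) (Fin n) ℝ) : Prop :=
  ∃ d : Fin n → ℝ, (∀ i, 0 < d i) ∧
    IsDD (Matrix.diagonal d * A * Matrix.diagonal d)


private lemma small_t (a c t₀ : ℝ) (ht₀ : 0 < t₀) (h : ∀ t : ℝ, 0 < t → t ≤ t₀ → a ≤ t * c) : a ≤ 0 := by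
  by_contra hc
  push_neg at hc
  set t := min t₀ (a / (2 * (|c| + 1))) with ht
  have hpos : 0 < t := lt_min ht₀ (by positivity)
  have h1 := h t hpos (min_le_left _ _)
  have h2 : t ≤ a / (2 * (|c| + 1)) := min_le_right _ _
  have h3 : t * c ≤ t * |c| := by
    have := le_abs_self c
    nlinarith
  have h4 : (0:ℝ) ≤ |c| := abs_nonneg c
  have h5 : t * |c| ≤ a / (2 * (|c| + 1)) * |c| := mul_le_mul_of_nonneg_right h2 h4
  have h6 : a / (2 * (|c| + 1)) * |c| < a := by
    rw [div_mul_eq_mul_div, div_lt_iff₀ (by positivity)]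
    nlinarith
  linarith

private lemma bsymm {m : ℕ} (M : Matrix (Fin m) (Fin m) ℝ) (hM : ∀ a b, M a b = M b a)
    (x y : Fin m → ℝ) : x ⬝ᵥ M *ᵥ y = y ⬝ᵥ M *ᵥ x := by
  simp only [dotProduct, mulVec, Finset.mul_sum]
  rw [Finset.sum_comm]
  apply Finset.sum_congr rfl; intro i _
  apply Finset.sum_congr rfl; intro j _
  rw [hM]; ring

private lemma core : ∀ m : ℕ, ∀ M : Matrix (Fin m) (Fin m) ℝ,
    (∀ a b, M a b = M b a) →
    (∀ a b, a ≠ b → M a b ≤ 0) →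
    (∀ x : Fin m → ℝ, 0 ≤ x ⬝ᵥ M *ᵥ x) →
    ∃ d : Fin m → ℝ, (∀ i, 0 < d i) ∧ ∀ i, 0 ≤ (M *ᵥ d) i := by
  intro m
  induction m using Nat.strong_induction_on with
  | _ m IH =>
  intro M hsym hz hpsd
  rcases Nat.eq_zero_or_pos m with hm | hm
  · subst hm
    exact ⟨fun i => 1, fun i => i.elim0, fun i => i.elim0⟩
  -- minimize quadratic form on the simplex
  have hne : (stdSimplex ℝ (Fin m)).Nonempty := by
    refine ⟨fun _ => (m : ℝ)⁻¹, fun i => by positivity, ?_⟩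
    simp [Finset.sum_const, Finset.card_univ]
    field_simp
  have hcont : Continuous fun x : Fin m → ℝ => x ⬝ᵥ M *ᵥ x := by
    simp only [dotProduct, mulVec]
    fun_prop
  obtain ⟨d, hdmem, hdmin⟩ := (isCompact_stdSimplex ℝ (Fin m)).exists_isMinOn hne hcont.continuousOn
  obtain ⟨hd0, hdsum⟩ := hdmem
  -- first order conditions
  have hfo : ∀ i j : Fin m, i ≠ j → 0 < d i → (M *ᵥ d) i ≤ (M *ᵥ d) j := by
    intro i j hij hdi
    set u : Fin m → ℝ := Pi.single j 1 - Pi.single i 1 with hu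
    have husum : ∑ k, u k = 0 := by
      simp [hu, Finset.sum_sub_distrib]
    have key : ∀ t : ℝ, 0 < t → t ≤ d i →
        (M *ᵥ d) i - (M *ᵥ d) j ≤ t * ((u ⬝ᵥ M *ᵥ u) / 2) := by
      intro t ht htd
      have hmem : d + t • u ∈ stdSimplex ℝ (Fin m) := by
        constructor
        · intro k
          rcases eq_or_ne k i with rfl | hki
          · have : u k = -1 := by simp [hu, Pi.single_apply, hij.symm]
            simp [this]; linarith
          · rcases eq_or_ne k j with rfl | hkj
            · have : u k = 1 := by simp [hu, Pi.single_apply, hij.symm]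
              simp [this]
              have := hd0 k; nlinarith
            · have : u k = 0 := by simp [hu, Pi.single_apply, hki, hkj]
              simp [this]; exact hd0 k
        · simp [Finset.sum_add_distrib, hdsum, ← Finset.mul_sum, husum]
      have hmin := hdmin hmem
      have hexp : (d + t • u) ⬝ᵥ M *ᵥ (d + t • u)
          = d ⬝ᵥ M *ᵥ d + 2 * t * (u ⬝ᵥ M *ᵥ d) + t^2 * (u ⬝ᵥ M *ᵥ u) := by
        simp only [mulVec_add, mulVec_smul, dotProduct_add, add_dotProduct,
          dotProduct_smul, smul_dotProduct, smul_eq_mul]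
        rw [bsymm M hsym d u]
        ring
      have hud : u ⬝ᵥ M *ᵥ d = (M *ᵥ d) j - (M *ᵥ d) i := by
        simp [hu, sub_dotProduct, single_dotProduct]
      have h0 : d ⬝ᵥ M *ᵥ d ≤ (d + t • u) ⬝ᵥ M *ᵥ (d + t • u) := hmin
      rw [hexp, hud] at h0
      nlinarith
    have := small_t ((M *ᵥ d) i - (M *ᵥ d) j) ((u ⬝ᵥ M *ᵥ u) / 2) (d i) hdi key
    linarith
  -- there is an index with positive weight
  have hex : ∃ i₀, 0 < d i₀ := by
    by_contra hcon
    push_neg at hcon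
    have : ∀ i, d i = 0 := fun i => le_antisymm (hcon i) (hd0 i)
    simp [this] at hdsum
  obtain ⟨i₀, hi₀⟩ := hex
  set μ := (M *ᵥ d) i₀ with hμ
  have hclaim1 : ∀ j, μ ≤ (M *ᵥ d) j := by
    intro j
    rcases eq_or_ne i₀ j with rfl | hne'
    · exact le_rfl
    · exact hfo i₀ j hne' hi₀
  have hclaim2 : ∀ i, 0 < d i → (M *ᵥ d) i = μ := by
    intro i hdi
    rcases eq_or_ne i i₀ with rfl | hne'
    · rfl
    · exact le_antisymm (hfo i i₀ hne' hdi) (hclaim1 i)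
  have hμ0 : 0 ≤ μ := by
    have h1 : d ⬝ᵥ M *ᵥ d = μ := by
      rw [dotProduct]
      have : ∀ i ∈ Finset.univ, d i * (M *ᵥ d) i = d i * μ := by
        intro i _
        rcases (hd0 i).eq_or_lt with h | h
        · rw [← h]; ring
        · rw [hclaim2 i h]
      rw [Finset.sum_congr rfl this, ← Finset.sum_mul, hdsum, one_mul]
    rw [← h1]; exact hpsd d
  -- decoupling across the zero set
  have hclaim4 : ∀ j, d j = 0 → ∀ k, 0 < d k → M j k = 0 := by
    intro j hdj
    have hsumj : (M *ᵥ d) j = ∑ k, M j k * d k := by rw [mulVec, dotProduct]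
    have hterm : ∀ k ∈ Finset.univ, M j k * d k ≤ 0 := by
      intro k _
      rcases (hd0 k).eq_or_lt with h | h
      · rw [← h]; simp
      · have hkj : j ≠ k := by rintro rfl; rw [hdj] at h; exact lt_irrefl _ h
        have := hz j k hkj
        nlinarith
    have hle : (M *ᵥ d) j ≤ 0 := by rw [hsumj]; exact Finset.sum_nonpos hterm
    have hge : 0 ≤ (M *ᵥ d) j := le_trans hμ0 (hclaim1 j)
    have hzero : ∑ k, M j k * d k = 0 := by rw [← hsumj]; linarith
    have := (Finset.sum_eq_zero_iff_of_nonpos hterm).mp hzero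
    intro k hk
    have h := this k (Finset.mem_univ k)
    rcases mul_eq_zero.mp h with h' | h'
    · exact h'
    · exfalso; rw [h'] at hk; exact lt_irrefl _ hk
  -- the zero set
  set T : Finset (Fin m) := Finset.univ.filter (fun j => d j = 0) with hT
  rcases eq_or_ne T ∅ with hTe | hTne
  · -- d is already positive
    refine ⟨d, ?_, ?_⟩
    · intro i
      rcases (hd0 i).eq_or_lt with h | h
      · exfalso
        have : i ∈ T := by simp [hT, ← h]
        rw [hTe] at this; exact absurd this (Finset.notMem_empty i)
      · exact h
    · intro i; exact le_trans hμ0 (hclaim1 i)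

  · -- recurse on T
    set eT := T.equivFin with heT
    set g : Fin T.card → Fin m := fun a => ((eT.symm a : {x // x ∈ T}) : Fin m) with hg
    have hgT : ∀ a, g a ∈ T := fun a => (eT.symm a).2
    have hdg : ∀ a, d (g a) = 0 := by
      intro a
      have := hgT a
      simp only [hT, Finset.mem_filter] at this
      exact this.2
    have hi₀T : i₀ ∉ T := by
      simp only [hT, Finset.mem_filter]
      rintro ⟨-, h⟩
      rw [h] at hi₀; exact lt_irrefl _ hi₀
    have htlt : T.card < m := by
      have h1 : T ⊂ Finset.univ := by
        refine Finset.ssubset_univ_iff.mpr ?_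
        intro h; rw [h] at hi₀T; exact hi₀T (Finset.mem_univ i₀)
      have := Finset.card_lt_card h1
      simpa using this
    have hsumT : ∀ F : Fin m → ℝ, ∑ j ∈ T, F j = ∑ a : Fin T.card, F (g a) := by
      intro F
      rw [← Finset.sum_coe_sort T F]
      exact Fintype.sum_equiv eT (fun x => F ↑x) (fun a => F (g a))
        (fun x => by simp [hg])
    set M' := M.submatrix g g with hM'
    have hsym' : ∀ a b, M' a b = M' b a := fun a b => hsym _ _
    have hginj : Function.Injective g := fun a b h => by
      apply eT.symm.injective; exact Subtype.coe_injective h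
    have hz' : ∀ a b, a ≠ b → M' a b ≤ 0 := by
      intro a b hab
      exact hz _ _ (fun h => hab (hginj h))
    have hpsd' : ∀ x : Fin T.card → ℝ, 0 ≤ x ⬝ᵥ M' *ᵥ x := by
      intro x
      set xt : Fin m → ℝ := fun i => if h : i ∈ T then x (eT ⟨i, h⟩) else 0 with hxtdef
      have hxt : ∀ a, xt (g a) = x a := by
        intro a
        have h := hgT a
        simp only [hxtdef, dif_pos h]
        congr 1
        have : (⟨g a, h⟩ : {x // x ∈ T}) = eT.symm a := Subtype.ext rfl
        rw [this, Equiv.apply_symm_apply]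
      have hxt0 : ∀ i ∉ T, xt i = 0 := by
        intro i hi; simp [hxtdef, dif_neg hi]
      have hinner : ∀ i, (M *ᵥ xt) i = ∑ b, M i (g b) * x b := by
        intro i
        rw [mulVec, dotProduct]
        rw [← Finset.sum_subset (Finset.subset_univ T)
          (fun j _ hj => by rw [hxt0 j hj, mul_zero])]
        rw [hsumT (fun j => M i j * xt j)]
        exact Finset.sum_congr rfl (fun b _ => by rw [hxt])
      have hform : xt ⬝ᵥ M *ᵥ xt = x ⬝ᵥ M' *ᵥ x := by
        rw [dotProduct]
        rw [← Finset.sum_subset (Finset.subset_univ T)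
          (fun j _ hj => by rw [hxt0 j hj, zero_mul])]
        rw [hsumT (fun j => xt j * (M *ᵥ xt) j)]
        rw [dotProduct]
        apply Finset.sum_congr rfl
        intro a _
        rw [hxt, hinner]
        congr 1
      rw [← hform]
      exact hpsd xt
    obtain ⟨d', hd'pos, hd'M⟩ := IH T.card htlt M' hsym' hz' hpsd'
    set D : Fin m → ℝ := fun i => if h : i ∈ T then d' (eT ⟨i, h⟩) else d i with hD
    have hDg : ∀ a, D (g a) = d' a := by
      intro a
      have h := hgT a
      simp only [hD, dif_pos h]
      congr 1
      have : (⟨g a, h⟩ : {x // x ∈ T}) = eT.symm a := Subtype.ext rfl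
      rw [this, Equiv.apply_symm_apply]
    have hDoff : ∀ i ∉ T, D i = d i := by
      intro i hi; simp [hD, dif_neg hi]
    have hdposoff : ∀ i ∉ T, 0 < d i := by
      intro i hi
      rcases (hd0 i).eq_or_lt with h | h
      · exfalso; exact hi (by simp [hT, ← h])
      · exact h
    refine ⟨D, ?_, ?_⟩
    · intro i
      by_cases h : i ∈ T
      · rw [show D i = d' (eT ⟨i, h⟩) from by simp [hD, dif_pos h]]
        exact hd'pos _
      · rw [hDoff i h]; exact hdposoff i h
    · intro i
      have hsplit : (M *ᵥ D) i = ∑ j ∈ T, M i j * D j + ∑ j ∈ Tᶜ, M i j * D j := by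
        rw [mulVec, dotProduct, ← Finset.sum_add_sum_compl T]
      by_cases h : i ∈ T
      · have hdi : d i = 0 := by
          have := h; simp only [hT, Finset.mem_filter] at this; exact this.2
        have h2 : ∑ j ∈ Tᶜ, M i j * D j = 0 := by
          apply Finset.sum_eq_zero
          intro j hj
          have hjT : j ∉ T := Finset.mem_compl.mp hj
          rw [hclaim4 i hdi j (hdposoff j hjT), zero_mul]
        have h1 : ∑ j ∈ T, M i j * D j = (M' *ᵥ d') (eT ⟨i, h⟩) := by
          rw [hsumT (fun j => M i j * D j), mulVec, dotProduct]
          have hi' : g (eT ⟨i, h⟩) = i := by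
            show ((eT.symm (eT ⟨i, h⟩) : {x // x ∈ T}) : Fin m) = i
            rw [Equiv.symm_apply_apply]
          apply Finset.sum_congr rfl
          intro b _
          rw [hDg]
          show M i (g b) * d' b = M.submatrix g g (eT ⟨i, h⟩) b * d' b
          rw [submatrix_apply, hi']
        rw [hsplit, h1, h2, add_zero]
        exact hd'M _
      · have hdi : 0 < d i := hdposoff i h
        have h1 : ∑ j ∈ T, M i j * D j = 0 := by
          apply Finset.sum_eq_zero
          intro j hj
          have hdj : d j = 0 := by
            simp only [hT, Finset.mem_filter] at hj; exact hj.2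
          rw [hsym i j, hclaim4 j hdj i hdi, zero_mul]
        have h2 : ∑ j ∈ Tᶜ, M i j * D j = (M *ᵥ d) i := by
          have e1 : ∑ j ∈ Tᶜ, M i j * D j = ∑ j ∈ Tᶜ, M i j * d j :=
            Finset.sum_congr rfl (fun j hj => by rw [hDoff j (Finset.mem_compl.mp hj)])
          rw [e1, mulVec, dotProduct]
          apply Finset.sum_subset (Finset.subset_univ Tᶜ)
          intro j _ hj
          have hjT : j ∈ T := by simpa using hj
          have hdj : d j = 0 := by
            simp only [hT, Finset.mem_filter] at hjT; exact hjT.2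
          rw [hdj, mul_zero]
        rw [hsplit, h1, h2, zero_add]
        exact le_trans hμ0 (hclaim1 i)

private lemma form_two {m : ℕ} (N : Matrix (Fin m) (Fin m) ℝ) (i j : Fin m) (hij : i ≠ j)
    (hN : ∀ a b, (a ≠ i ∧ a ≠ j) ∨ (b ≠ i ∧ b ≠ j) → N a b = 0) (x : Fin m → ℝ) :
    x ⬝ᵥ N *ᵥ x = N i i * (x i * x i) + N i j * (x i * x j)
      + N j i * (x j * x i) + N j j * (x j * x j) := by
  have hpair : ({i, j} : Finset (Fin m)) ⊆ Finset.univ := Finset.subset_univ _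
  have hinner : ∀ a, (N *ᵥ x) a = N a i * x i + N a j * x j := by
    intro a
    rw [mulVec, dotProduct]
    rw [← Finset.sum_subset hpair (fun b _ hb => by
      have : b ≠ i ∧ b ≠ j := by
        constructor <;> rintro rfl <;> simp at hb
      rw [hN a b (Or.inr this), zero_mul])]
    rw [Finset.sum_pair hij]
  rw [dotProduct]
  rw [← Finset.sum_subset hpair (fun a _ ha => by
    have : a ≠ i ∧ a ≠ j := by
      constructor <;> rintro rfl <;> simp at ha
    rw [show x a * (N *ᵥ x) a = x a * (N a i * x i + N a j * x j) from by rw [hinner],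
      hN a i (Or.inl this), hN a j (Or.inl this)]
    ring)]
  rw [Finset.sum_pair hij, hinner, hinner]
  ring

private lemma mulVec_sum' {m : ℕ} {β : Type*} (s : Finset β) (A : β → Matrix (Fin m) (Fin m) ℝ)
    (v x : Fin m → ℝ) : x ⬝ᵥ (∑ c ∈ s, A c) *ᵥ v = ∑ c ∈ s, x ⬝ᵥ (A c) *ᵥ v := by
  have h1 : (∑ c ∈ s, A c) *ᵥ v = ∑ c ∈ s, (A c *ᵥ v) := by
    funext a
    simp only [mulVec, dotProduct, Matrix.sum_apply, Finset.sum_apply, Finset.sum_mul]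
    rw [Finset.sum_comm]
  rw [h1]
  simp only [dotProduct, Finset.sum_apply, Finset.mul_sum]
  rw [Finset.sum_comm]

theorem factorWidthTwo_isSDD {n : ℕ} (hn : 2 ≤ n)
    (A : Matrix (Fin n) (Fin n) ℝ) (hA : A.IsSymm)
    (Q : Fin n → Fin n → Matrix (Fin n) (Fin n) ℝ)
    (hpsd : ∀ i j : Fin n, i < j → (Q i j).PosSemidef)
    (hsupp : ∀ i j : Fin n, i < j → ∀ a c : Fin n,
      (a ≠ i ∧ a ≠ j) ∨ (c ≠ i ∧ c ≠ j) → Q i j a c = 0)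
    (hsum : A = ∑ i : Fin n, ∑ j ∈ Finset.Ioi i, Q i j) :
    IsSDD A := by
  have hAsymm : ∀ a b, A a b = A b a := fun a b => congrFun (congrFun hA b) a
  have hQsymm : ∀ i j : Fin n, i < j → ∀ a b, Q i j a b = Q i j b a := by
    intro i j hij a b
    have := (hpsd i j hij).1.apply b a
    simpa using this
  set R : Fin n → Fin n → Matrix (Fin n) (Fin n) ℝ :=
    fun i j => Matrix.of fun a b => if a = b then Q i j a a else -|Q i j a b| with hR
  set M : Matrix (Fin n) (Fin n) ℝ := ∑ i : Fin n, ∑ j ∈ Finset.Ioi i, R i j with hM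
  have hMentry : ∀ a b, M a b = ∑ i : Fin n, ∑ j ∈ Finset.Ioi i, R i j a b := by
    intro a b
    rw [hM, Matrix.sum_apply]
    exact Finset.sum_congr rfl fun i _ => Matrix.sum_apply _ _ _ _
  have hAentry : ∀ a b, A a b = ∑ i : Fin n, ∑ j ∈ Finset.Ioi i, Q i j a b := by
    intro a b
    rw [hsum, Matrix.sum_apply]
    exact Finset.sum_congr rfl fun i _ => Matrix.sum_apply _ _ _ _
  have hMdiag : ∀ a, M a a = A a a := by
    intro a
    rw [hMentry, hAentry]
    apply Finset.sum_congr rfl; intro i _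
    apply Finset.sum_congr rfl; intro j _
    simp [hR]
  have hsingleQ : ∀ (a b : Fin n), a < b → ∀ (f : ℝ → ℝ), f 0 = 0 →
      (∑ i : Fin n, ∑ j ∈ Finset.Ioi i, f (Q i j a b)) = f (Q a b a b) := by
    intro a b hab f hf0
    have hkey : ∀ i j : Fin n, i < j → ¬(i = a ∧ j = b) → Q i j a b = 0 := by
      intro i j hij hne
      apply hsupp i j hij
      rcases eq_or_ne a i with rfl | hai
      · right
        constructor
        · rintro rfl; exact absurd hab (lt_irrefl _)
        · rintro rfl; exact hne ⟨rfl, rfl⟩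
      · rcases eq_or_ne a j with rfl | haj
        · right
          constructor
          · rintro rfl; exact absurd (lt_trans hij hab) (lt_irrefl b)
          · rintro rfl; exact absurd hab (lt_irrefl _)
        · exact Or.inl ⟨hai, haj⟩
    rw [Finset.sum_eq_single_of_mem a (Finset.mem_univ a)]
    · rw [Finset.sum_eq_single_of_mem b (Finset.mem_Ioi.mpr hab)]
      intro j hj hjb
      rw [hkey a j (Finset.mem_Ioi.mp hj) (fun h => hjb h.2), hf0]
    · intro i _ hia
      apply Finset.sum_eq_zero
      intro j hj
      rw [hkey i j (Finset.mem_Ioi.mp hj) (fun h => hia h.1), hf0]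
  have hMoff_lt : ∀ a b, a < b → M a b = -|A a b| := by
    intro a b hab
    have h1 : M a b = -|Q a b a b| := by
      rw [hMentry]
      rw [← hsingleQ a b hab (fun t => -|t|) (by simp)]
      apply Finset.sum_congr rfl; intro i _
      apply Finset.sum_congr rfl; intro j _
      show (if a = b then Q i j a a else -|Q i j a b|) = -|Q i j a b|
      rw [if_neg (ne_of_lt hab)]
    have h2 : A a b = Q a b a b := by
      rw [hAentry]
      exact hsingleQ a b hab id rfl
    rw [h1, h2]
  have hMsym : ∀ a b, M a b = M b a := by
    intro a b
    rw [hMentry, hMentry]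
    apply Finset.sum_congr rfl; intro i _
    apply Finset.sum_congr rfl; intro j hj
    have hij := Finset.mem_Ioi.mp hj
    show (if a = b then Q i j a a else -|Q i j a b|)
      = (if b = a then Q i j b b else -|Q i j b a|)
    rcases eq_or_ne a b with rfl | hab
    · simp
    · rw [if_neg hab, if_neg hab.symm, hQsymm i j hij a b]
  have hMoff : ∀ a b, a ≠ b → M a b = -|A a b| := by
    intro a b hab
    rcases lt_or_gt_of_ne hab with h | h
    · exact hMoff_lt a b h
    · rw [hMsym a b, hMoff_lt b a h, hAsymm b a]
  have hMz : ∀ a b, a ≠ b → M a b ≤ 0 := fun a b h => by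
    rw [hMoff a b h]; exact neg_nonpos.mpr (abs_nonneg _)
  have hMpsd : ∀ x : Fin n → ℝ, 0 ≤ x ⬝ᵥ M *ᵥ x := by
    intro x
    rw [hM, mulVec_sum']
    apply Finset.sum_nonneg; intro i _
    rw [mulVec_sum']
    apply Finset.sum_nonneg; intro j hj
    have hij := Finset.mem_Ioi.mp hj
    have hijne : i ≠ j := ne_of_lt hij
    have hsuppR : ∀ a b, (a ≠ i ∧ a ≠ j) ∨ (b ≠ i ∧ b ≠ j) → R i j a b = 0 := by
      intro a b hcond
      show (if a = b then Q i j a a else -|Q i j a b|) = 0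
      rcases eq_or_ne a b with rfl | hab
      · rw [if_pos rfl]
        rcases hcond with h | h
        · exact hsupp i j hij a a (Or.inl h)
        · exact hsupp i j hij a a (Or.inr h)
      · rw [if_neg hab, hsupp i j hij a b hcond, abs_zero, neg_zero]
    rw [form_two (R i j) i j hijne hsuppR x]
    have eii : R i j i i = Q i j i i := by simp [hR]
    have ejj : R i j j j = Q i j j j := by simp [hR]
    have eij : R i j i j = -|Q i j i j| := by
      show (if i = j then Q i j i i else -|Q i j i j|) = -|Q i j i j|
      rw [if_neg hijne]
    have eji : R i j j i = -|Q i j i j| := by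
      show (if j = i then Q i j j j else -|Q i j j i|) = -|Q i j i j|
      rw [if_neg hijne.symm, hQsymm i j hij j i]
    set e := Q i j i j with he
    set ε : ℝ := if 0 ≤ e * (x i * x j) then -1 else 1 with hε
    set y : Fin n → ℝ := fun a => if a = j then ε * x j else x a with hy
    have hyi : y i = x i := by simp [hy, hijne]
    have hyj : y j = ε * x j := by simp [hy]
    have hQform : 0 ≤ y ⬝ᵥ (Q i j) *ᵥ y := by simpa using (hpsd i j hij).dotProduct_mulVec_nonneg y
    rw [form_two (Q i j) i j hijne (fun a b h => hsupp i j hij a b h) y, hyi, hyj,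
      hQsymm i j hij j i] at hQform
    have hε2 : ε * ε = 1 := by
      rw [hε]; split <;> norm_num
    have hεe : ε * (e * (x i * x j)) = -|e * (x i * x j)| := by
      rw [hε]; split
      next h => rw [abs_of_nonneg h]; ring
      next h => push_neg at h; rw [abs_of_neg (by linarith)]; ring
    have h1 : e * (x i * (ε * x j)) = -|e * (x i * x j)| := by rw [← hεe]; ring
    have h2 : e * ((ε * x j) * x i) = -|e * (x i * x j)| := by rw [← hεe]; ring
    have h3 : Q i j j j * ((ε * x j) * (ε * x j)) = Q i j j j * (x j * x j) := by
      have h4 : (ε * x j) * (ε * x j) = (ε * ε) * (x j * x j) := by ring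
      rw [h4, hε2, one_mul]
    rw [h1, h2, h3] at hQform
    have habs : -|e * (x i * x j)| ≤ -|e| * (x i * x j) := by
      rw [abs_mul]
      have h5 : |e| * (x i * x j) ≤ |e| * |x i * x j| :=
        mul_le_mul_of_nonneg_left (le_abs_self _) (abs_nonneg e)
      linarith
    rw [eii, ejj, eij, eji]
    nlinarith [hQform, habs]
  obtain ⟨d, hdpos, hdM⟩ := core n M hMsym hMz hMpsd
  refine ⟨d, hdpos, ?_⟩
  intro i
  have hrow := hdM i
  rw [mulVec, dotProduct,
    ← Finset.add_sum_erase Finset.univ (fun j => M i j * d j) (Finset.mem_univ i)] at hrow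
  have hnegsum : ∑ j ∈ Finset.univ.erase i, M i j * d j
      = -∑ j ∈ Finset.univ.erase i, |A i j| * d j := by
    rw [← Finset.sum_neg_distrib]
    apply Finset.sum_congr rfl
    intro j hj
    rw [hMoff i j (Ne.symm (Finset.ne_of_mem_erase hj))]
    ring
  rw [hnegsum, hMdiag] at hrow
  have hsum_le : ∑ j ∈ Finset.univ.erase i, |A i j| * d j ≤ A i i * d i := by linarith
  have hent : ∀ a b, (Matrix.diagonal d * A * Matrix.diagonal d) a b = d a * A a b * d b := by
    intro a b
    rw [Matrix.mul_diagonal, Matrix.diagonal_mul]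
  have hlhs : ∑ j ∈ Finset.univ.erase i, |(Matrix.diagonal d * A * Matrix.diagonal d) i j|
      = d i * ∑ j ∈ Finset.univ.erase i, |A i j| * d j := by
    rw [Finset.mul_sum]
    apply Finset.sum_congr rfl
    intro j _
    rw [hent, abs_mul, abs_mul, abs_of_pos (hdpos i), abs_of_pos (hdpos j)]
    ring
  rw [hlhs, hent]
  calc d i * ∑ j ∈ Finset.univ.erase i, |A i j| * d j
      ≤ d i * (A i i * d i) := mul_le_mul_of_nonneg_left hsum_le (le_of_lt (hdpos i))
    _ = d i * A i i * d i := by ring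
end

section
/- Let n, p be natural numbers and b : Fin n → Fin p a block assignment map, and let X be a real symmetric n×n matrix. Then trace(AX) ≥ 0 for every A ∈ FW_b if and only if, for every pair k < l in Fin p and every vector v ∈ ℝⁿ with v_i = 0 whenever b(i) ∉ {k,l}, one has vᵀ X v ≥ 0. In other words, the dual cone (FW_b)* consists exactly of the symmetric matrices all of whose 2×2-block principal submatrices (on the index sets {i : b(i) ∈ {k,l}}) are positive semidefinite. -/
open Matrix Finset

lemma aux_trace_nonneg {n : ℕ} (X Q : Matrix (Fin n) (Fin n) ℝ) (hQ : Q.PosSemidef)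
    (P : Fin n → Prop)
    (hsupp : ∀ i j, ¬ P i ∨ ¬ P j → Q i j = 0)
    (h : ∀ v : Fin n → ℝ, (∀ i, ¬ P i → v i = 0) → 0 ≤ v ⬝ᵥ X.mulVec v) :
    0 ≤ (Q * X).trace := by
  obtain ⟨B, hB⟩ : ∃ B : Matrix (Fin n) (Fin n) ℝ, Q = Bᴴ * B := by
    open scoped MatrixOrder in exact CStarAlgebra.nonneg_iff_eq_star_mul_self.mp hQ.nonneg
  have hdiag : ∀ i, ¬ P i → ∀ r, B r i = 0 := by
    intro i hi r
    have h0 : Q i i = 0 := hsupp i i (Or.inl hi)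
    rw [hB, Matrix.mul_apply] at h0
    have h1 : ∀ s ∈ Finset.univ, (0:ℝ) ≤ Bᴴ i s * B s i := by
      intro s _
      simp [Matrix.conjTranspose_apply, mul_self_nonneg]
    have := (Finset.sum_eq_zero_iff_of_nonneg h1).mp h0 r (Finset.mem_univ r)
    simp [Matrix.conjTranspose_apply] at this
    exact this
  have htr : (Q * X).trace = (B * X * Bᴴ).trace := by
    rw [hB, Matrix.mul_assoc, Matrix.trace_mul_comm, Matrix.mul_assoc]
  rw [htr, Matrix.trace]
  apply Finset.sum_nonneg
  intro r _
  have hdr : (B * X * Bᴴ).diag r = (fun i => B r i) ⬝ᵥ X.mulVec (fun i => B r i) := by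
    simp only [Matrix.diag, Matrix.mul_apply, Matrix.conjTranspose_apply, star_trivial, dotProduct,
      Matrix.mulVec, Finset.sum_mul, Finset.mul_sum]
    rw [Finset.sum_comm]
    apply Finset.sum_congr rfl
    intro i _
    apply Finset.sum_congr rfl
    intro j _
    ring
  rw [hdr]
  exact h _ (fun i hi => hdiag i hi r)

theorem dual_fw_characterization {n p : ℕ} (b : Fin n → Fin p)
    (X : Matrix (Fin n) (Fin n) ℝ) (hX : X.IsSymm) :
    (∀ A : Matrix (Fin n) (Fin n) ℝ, memFW b A → 0 ≤ (A * X).trace) ↔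
    (∀ k l : Fin p, k < l → ∀ v : Fin n → ℝ,
      (∀ i : Fin n, (b i ≠ k ∧ b i ≠ l) → v i = 0) →
      0 ≤ v ⬝ᵥ X.mulVec v) := by
  constructor
  · intro H k l hkl v hv
    set A : Matrix (Fin n) (Fin n) ℝ := Matrix.vecMulVec v v with hAdef
    have hmem : memFW b A := by
      refine ⟨fun k' l' => if k' = k ∧ l' = l then A else 0, ?_, ?_, ?_⟩
      · intro k' l' _
        dsimp only
        by_cases hc : k' = k ∧ l' = l
        · rw [if_pos hc]
          have : A = (Matrix.replicateRow Unit v)ᴴ * Matrix.replicateRow Unit v := by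
            ext i j
            simp [hAdef, Matrix.vecMulVec_apply, Matrix.mul_apply]
          rw [this]
          exact Matrix.posSemidef_conjTranspose_mul_self _
        · rw [if_neg hc]
          exact Matrix.PosSemidef.zero
      · intro k' l' _ i j hij
        dsimp only
        by_cases hc : k' = k ∧ l' = l
        · rw [if_pos hc]
          obtain ⟨hk', hl'⟩ := hc
          subst hk'; subst hl'
          rcases hij with h1 | h1
          · simp [hAdef, Matrix.vecMulVec_apply, hv i h1]
          · simp [hAdef, Matrix.vecMulVec_apply, hv j h1]
        · rw [if_neg hc]; rfl
      · rw [Finset.sum_eq_single k]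
        · rw [Finset.sum_eq_single_of_mem l (Finset.mem_Ioi.mpr hkl)]
          · simp
          · intro l' _ hne
            dsimp only
            rw [if_neg (by tauto)]
        · intro k' _ hne
          apply Finset.sum_eq_zero
          intro l' _
          dsimp only
          rw [if_neg (by tauto)]
        · intro habs
          exact absurd (Finset.mem_univ k) habs
    have := H A hmem
    have htr : (A * X).trace = v ⬝ᵥ X.mulVec v := by
      simp only [Matrix.trace, Matrix.diag, Matrix.mul_apply, hAdef,
        Matrix.vecMulVec_apply, dotProduct, Matrix.mulVec, Finset.mul_sum]
      rw [Finset.sum_comm]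
      apply Finset.sum_congr rfl
      intro i _
      apply Finset.sum_congr rfl
      intro j _
      ring
    rwa [htr] at this
  · rintro H A ⟨Q, hPSD, hsupp, rfl⟩
    rw [Finset.sum_mul, Matrix.trace_sum]
    apply Finset.sum_nonneg
    intro k _
    rw [Finset.sum_mul, Matrix.trace_sum]
    apply Finset.sum_nonneg
    intro l hl
    have hkl : k < l := Finset.mem_Ioi.mp hl
    apply aux_trace_nonneg X (Q k l) (hPSD k l hkl) (fun i => b i = k ∨ b i = l)
    · intro i j hij
      apply hsupp k l hkl
      rcases hij with h1 | h1
      · left; constructor <;> (intro h; exact h1 (by simp [h]))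
      · right; constructor <;> (intro h; exact h1 (by simp [h]))
    · intro v hv
      apply H k l hkl v
      intro i hi
      apply hv
      tauto
end

section
/- Let n, p be natural numbers with p ≥ 2 and b : Fin n → Fin p a block assignment map, and let M be any real symmetric n×n matrix. Then there exists λ̄ ∈ (0,1) such that for every λ with 0 < λ < λ̄, the matrix (1−λ)·I + λ·M belongs to FW_b; that is, the identity matrix lies in the interior of the block factor-width-two cone in the direction of any symmetric matrix. -/
open Matrix Finset

set_option maxHeartbeats 1000000
theorem one_mem_interior_fw {n p : ℕ} (hp : 2 ≤ p) (b : Fin n → Fin p)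
    (M : Matrix (Fin n) (Fin n) ℝ) (hM : M.IsSymm) :
    ∃ lamBar : ℝ, lamBar ∈ Set.Ioo (0 : ℝ) 1 ∧
      ∀ lam : ℝ, 0 < lam → lam < lamBar →
        memFW b ((1 - lam) • (1 : Matrix (Fin n) (Fin n) ℝ) + lam • M) := by
  have hq1 : (1 : ℝ) ≤ (p : ℝ) - 1 := by
    have : (2:ℝ) ≤ (p:ℝ) := by exact_mod_cast hp
    linarith
  set q : ℝ := (p : ℝ) - 1 with hqdef
  have hq0 : 0 < q := lt_of_lt_of_le one_pos hq1
  set K : ℝ := ∑ i : Fin n, ∑ j : Fin n, |M i j| with hKdef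
  have hK0 : 0 ≤ K := Finset.sum_nonneg fun i _ => Finset.sum_nonneg fun j _ => abs_nonneg _
  refine ⟨1 / (1 + q * (K + 1)), ⟨by positivity, ?_⟩, ?_⟩
  · rw [div_lt_one (by positivity)]
    nlinarith
  intro lam hl0 hl1
  rw [lt_div_iff₀ (by positivity)] at hl1
  set A : Matrix (Fin n) (Fin n) ℝ := (1 - lam) • 1 + lam • M with hAdef
  have hA : ∀ i j, A i j = (if i = j then (1-lam) else 0) + lam * M i j := by
    intro i j
    simp [hAdef, Matrix.one_apply, mul_ite]
  have hMs : ∀ i j, M j i = M i j := fun i j => (hM.apply j i).symm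
  have hAsymm : ∀ i j, A j i = A i j := by
    intro i j
    rw [hA, hA, hMs]
    by_cases h : i = j <;> simp [h, eq_comm]
  refine ⟨fun k l => Matrix.of fun i j =>
      if (b i = k ∨ b i = l) ∧ (b j = k ∨ b j = l) then
        (if b i = b j then A i j / q else A i j) else 0, ?_, ?_, ?_⟩
  · -- PSD
    intro k l hkl
    rw [Matrix.posSemidef_iff_dotProduct_mulVec]
    constructor
    · ext i j
      simp only [Matrix.conjTranspose_apply, Matrix.of_apply, star_trivial]
      rw [hAsymm]
      exact if_congr and_comm (if_congr eq_comm rfl rfl) rfl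
    · intro x
      simp only [star_trivial, dotProduct, Matrix.mulVec, Matrix.of_apply]
      set y : Fin n → ℝ := fun i => if b i = k ∨ b i = l then x i else 0 with hy
      set Y : ℝ := ∑ i, y i ^ 2 with hYdef
      have hY0 : 0 ≤ Y := Finset.sum_nonneg fun i _ => sq_nonneg _
      have hterm : ∀ i j : Fin n,
          x i * ((if (b i = k ∨ b i = l) ∧ (b j = k ∨ b j = l) then
            (if b i = b j then A i j / q else A i j) else 0) * x j)
          = (if i = j then (1-lam)/q * y i ^ 2 else 0)
            + lam * ((if b i = b j then M i j / q else M i j) * (y i * y j)) := by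
        intro i j
        by_cases hi : b i = k ∨ b i = l
        · by_cases hj : b j = k ∨ b j = l
          · have hy1 : y i = x i := if_pos hi
            have hy2 : y j = x j := if_pos hj
            rw [if_pos ⟨hi, hj⟩, hy1, hy2, hA]
            by_cases hbij : b i = b j
            · simp only [if_pos hbij]
              by_cases hij : i = j
              · simp only [if_pos hij]
                subst hij
                field_simp
              · simp only [if_neg hij]
                field_simp
                ring
            · have hij : i ≠ j := fun h => hbij (h ▸ rfl)
              simp only [if_neg hbij, if_neg hij]
              ring
          · have hij : i ≠ j := fun h => hj (h ▸ hi)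
            have hy2 : y j = 0 := if_neg hj
            rw [if_neg (fun h => hj h.2), hy2, if_neg hij]
            ring
        · have hy1 : y i = 0 := if_neg hi
          rw [if_neg (fun h : _ ∧ _ => hi h.1), hy1]
          by_cases hij : i = j
          · simp only [if_pos hij]
            ring
          · simp only [if_neg hij]
            ring
      have hquad : (∑ i, x i * ∑ j, ((if (b i = k ∨ b i = l) ∧ (b j = k ∨ b j = l) then
            (if b i = b j then A i j / q else A i j) else 0) * x j))
          = (1-lam)/q * Y
            + lam * ∑ i, ∑ j, ((if b i = b j then M i j / q else M i j) * (y i * y j)) := by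
        simp only [Finset.mul_sum]
        rw [Finset.sum_congr rfl fun i _ => Finset.sum_congr rfl fun j _ => hterm i j]
        simp only [Finset.sum_add_distrib, Finset.sum_ite_eq, Finset.mem_univ, if_true,
          ← Finset.mul_sum, hYdef]
      rw [hquad]
      have hT : -(K * Y) ≤ ∑ i, ∑ j, ((if b i = b j then M i j / q else M i j) * (y i * y j)) := by
        have hpt : ∀ i j : Fin n,
            -(|M i j| * Y) ≤ (if b i = b j then M i j / q else M i j) * (y i * y j) := by
          intro i j
          have hyi : y i ^ 2 ≤ Y :=
            Finset.single_le_sum (fun t _ => sq_nonneg (y t)) (Finset.mem_univ i)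
          have hyj : y j ^ 2 ≤ Y :=
            Finset.single_le_sum (fun t _ => sq_nonneg (y t)) (Finset.mem_univ j)
          have habs : |y i * y j| ≤ Y := by
            rw [abs_mul]
            nlinarith [abs_nonneg (y i), abs_nonneg (y j), sq_abs (y i), sq_abs (y j),
              sq_nonneg (|y i| - |y j|)]
          have hM' : |if b i = b j then M i j / q else M i j| ≤ |M i j| := by
            split_ifs
            · rw [abs_div, abs_of_pos hq0]
              exact div_le_self (abs_nonneg _) hq1
            · exact le_refl _
          calc -(|M i j| * Y)
              ≤ -|(if b i = b j then M i j / q else M i j) * (y i * y j)| := by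
                rw [abs_mul]
                exact neg_le_neg (mul_le_mul hM' habs (abs_nonneg _) (abs_nonneg _))
            _ ≤ _ := neg_abs_le _
        calc -(K * Y) = ∑ i : Fin n, ∑ j : Fin n, -(|M i j| * Y) := by
              simp only [hKdef, Finset.sum_mul, Finset.sum_neg_distrib]
          _ ≤ _ := Finset.sum_le_sum fun i _ => Finset.sum_le_sum fun j _ => hpt i j
      have h1 : lam * K ≤ (1-lam)/q := by
        rw [le_div_iff₀ hq0]
        nlinarith
      nlinarith [mul_le_mul_of_nonneg_left hT hl0.le, mul_le_mul_of_nonneg_right h1 hY0]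
  · -- support
    intro k l hkl i j h
    simp only [Matrix.of_apply]
    rw [if_neg]
    rcases h with ⟨h1, h2⟩ | ⟨h1, h2⟩ <;> tauto
  · -- sum
    ext i j
    simp only [Matrix.sum_apply, Matrix.of_apply]
    by_cases hbij : b i = b j
    · have hstep : ∀ k : Fin p, ∀ l ∈ Finset.Ioi k,
          (if (b i = k ∨ b i = l) ∧ (b j = k ∨ b j = l) then
            (if b i = b j then A i j / q else A i j) else 0)
          = (if b i = k then A i j / q else 0) + (if b i = l then A i j / q else 0) := by
        intro k l hl
        rw [Finset.mem_Ioi] at hl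
        simp only [← hbij, and_self, if_pos rfl]
        by_cases h1 : b i = k
        · by_cases h2 : b i = l
          · exact absurd (h1.symm.trans h2) (ne_of_lt hl)
          · simp [h1, h2]
            intro h
            exact absurd h (ne_of_lt hl)
        · by_cases h2 : b i = l
          · simp [h1, h2]
            intro h
            exact absurd h.symm (ne_of_lt hl)
          · simp [h1, h2]
      rw [Finset.sum_congr rfl (fun k _ => Finset.sum_congr rfl (hstep k))]
      simp only [Finset.sum_add_distrib, Finset.sum_const, Finset.sum_ite_eq, Finset.mem_univ,
        if_true]
      simp only [smul_ite, smul_zero, Finset.sum_ite_eq, Finset.mem_univ, if_true,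
        Finset.mem_Ioi, ← Finset.mem_Iio, Finset.sum_ite_mem, Finset.univ_inter,
        Finset.sum_const, Fin.card_Ioi, Fin.card_Iio, smul_eq_mul, nsmul_eq_mul]
      have hnat : (p - 1 - ((b i) : ℕ)) + ((b i) : ℕ) = p - 1 := by
        have := (b i).isLt
        omega
      have hc : (↑(p - 1 - ((b i) : ℕ)) : ℝ) * (A i j / q) + (↑((b i) : ℕ) : ℝ) * (A i j / q)
          = q * (A i j / q) := by
        rw [← add_mul, ← Nat.cast_add, hnat, hqdef, Nat.cast_sub (by omega : 1 ≤ p)]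
        norm_num
      rw [hc, mul_comm, div_mul_cancel₀ _ (ne_of_gt hq0)]
    · have hm : min (b i) (b j) < max (b i) (b j) := min_lt_max.2 hbij
      have key : ∀ k l : Fin p, k < l →
          (((b i = k ∨ b i = l) ∧ (b j = k ∨ b j = l)) ↔
            (k = min (b i) (b j) ∧ l = max (b i) (b j))) := by
        intro k l hkl
        rcases lt_or_gt_of_ne hbij with h | h
        · rw [min_eq_left h.le, max_eq_right h.le]
          simp only [Fin.ext_iff, Fin.lt_def] at *
          omega
        · rw [min_eq_right h.le, max_eq_left h.le]
          simp only [Fin.ext_iff, Fin.lt_def] at *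
          omega
      have hstep : ∀ k : Fin p, ∀ l ∈ Finset.Ioi k,
          (if (b i = k ∨ b i = l) ∧ (b j = k ∨ b j = l) then
            (if b i = b j then A i j / q else A i j) else 0)
          = (if k = min (b i) (b j) ∧ l = max (b i) (b j) then A i j else 0) := by
        intro k l hl
        rw [Finset.mem_Ioi] at hl
        rw [if_neg hbij, if_congr (key k l hl) rfl rfl]
      rw [Finset.sum_congr rfl (fun k _ => Finset.sum_congr rfl (hstep k))]
      simp only [ite_and, Finset.sum_ite_eq', Finset.mem_univ, if_true, Finset.mem_Ioi]
      have hF : (b j = b i) = False := eq_false fun h => hbij h.symm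
      simp [hm, hF]
end

section
/- (Monotonically decreasing upper bounds, Proposition 1 key step.) Let n, m, p ∈ ℕ with p ≥ 2, b : Fin n → Fin p a block assignment map, and let C, A_1, …, A_m be real symmetric n×n matrices and g ∈ ℝ^m. Suppose X₀ ∈ F(V) for some real n×n matrix V (i.e. ⟨A_i, X₀⟩ = g_i for all i and X₀ ∈ FW_b(V)), and let V' be any real n×n matrix with V'ᵀ V' = X₀ (e.g. a Cholesky factor of X₀). Then X₀ ∈ F(V'); consequently, if the set {⟨C, X⟩ : X ∈ F(V')} is bounded below, its infimum is at most ⟨C, X₀⟩. In particular the optimal values U^t of the iterative inner approximation with V_{t+1} = chol(X_t^⋆) satisfy U^1 ≥ U^2 ≥ … ≥ U^t ≥ U^{t+1}. -/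
open Matrix Finset

/-- Feasible set of the inner approximation at `V`:
`⟨A_i, X⟩ = g i` for all `i`, and `X ∈ FW_b(V)`. -/
def Fset {n m p : ℕ} (b : Fin n → Fin p) (A : Fin m → Matrix (Fin n) (Fin n) ℝ)
    (g : Fin m → ℝ) (V : Matrix (Fin n) (Fin n) ℝ) : Set (Matrix (Fin n) (Fin n) ℝ) :=
  {X | (∀ i : Fin m, (A i * X).trace = g i) ∧ memFWV b V X}

lemma memFW_one {n p : ℕ} (hp : 2 ≤ p) (b : Fin n → Fin p) :
    memFW b (1 : Matrix (Fin n) (Fin n) ℝ) := by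
  have hp0 : 0 < p := by omega
  set z : Fin p := ⟨0, by omega⟩ with hz
  set e : Fin p := ⟨1, by omega⟩ with he
  have h1 : e ≠ z := by simp [hz, he, Fin.ext_iff]
  set o : Fin p → Fin p := fun k => if k = z then e else z with ho
  have hne : ∀ k : Fin p, o k ≠ k := by
    intro k
    by_cases hk : k = z
    · simp [ho, hk, h1]
    · simp [ho, hk]
      exact fun h => hk h.symm
  set lo : Fin n → Fin p := fun i => min (b i) (o (b i)) with hlo
  set hi : Fin n → Fin p := fun i => max (b i) (o (b i)) with hhi
  have hlt : ∀ i, lo i < hi i := by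
    intro i
    rcases lt_or_gt_of_ne (hne (b i)) with h | h
    · simpa [hlo, hhi, min_eq_right h.le, max_eq_left h.le] using h
    · simpa [hlo, hhi, min_eq_left h.le, max_eq_right h.le] using h
  have hbmem : ∀ i, b i = lo i ∨ b i = hi i := by
    intro i
    rcases le_total (b i) (o (b i)) with h | h
    · left; simp [hlo, min_eq_left h]
    · right; simp [hhi, max_eq_left h]
  refine ⟨fun k l => Matrix.diagonal (fun i => if lo i = k ∧ hi i = l then (1:ℝ) else 0),
    ?_, ?_, ?_⟩
  · intro k l _
    exact Matrix.posSemidef_diagonal_iff.mpr (fun i => by positivity)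
  · intro k l _ i j hij
    dsimp only
    by_cases hij' : i = j
    · subst hij'
      rw [Matrix.diagonal_apply_eq]
      rw [if_neg]
      rintro ⟨h1, h2⟩
      rcases hij with ⟨ha, hb⟩ | ⟨ha, hb⟩ <;>
        rcases hbmem i with h | h <;> simp only [h1, h2] at h <;> tauto
    · exact Matrix.diagonal_apply_ne _ hij'
  · ext i j
    by_cases hij : i = j
    · subst hij
      simp only [Matrix.sum_apply, Matrix.diagonal_apply_eq, Matrix.one_apply_eq]
      have : ∀ k : Fin p, (∑ l ∈ Finset.Ioi k, if lo i = k ∧ hi i = l then (1:ℝ) else 0)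
          = if lo i = k then (if hi i ∈ Finset.Ioi k then (1:ℝ) else 0) else 0 := by
        intro k
        by_cases hk : lo i = k
        · simp only [hk, true_and, if_true]
          exact Finset.sum_ite_eq (Finset.Ioi k) (hi i) (fun _ => (1:ℝ))
        · simp [hk]
      rw [Finset.sum_congr rfl (fun k _ => this k)]
      rw [Finset.sum_ite_eq (Finset.univ) (lo i)
        (fun k => if hi i ∈ Finset.Ioi k then (1:ℝ) else 0)]
      simp [Finset.mem_Ioi, hlt i]
    · simp only [Matrix.sum_apply, Matrix.diagonal_apply_ne _ hij, Matrix.one_apply_ne hij,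
        Finset.sum_const_zero]

theorem inner_approx_monotone_step {n m p : ℕ} (hp : 2 ≤ p) (b : Fin n → Fin p)
    (C : Matrix (Fin n) (Fin n) ℝ) (A : Fin m → Matrix (Fin n) (Fin n) ℝ)
    (g : Fin m → ℝ) (hC : C.IsSymm) (hAs : ∀ i, (A i).IsSymm)
    (V V' X₀ : Matrix (Fin n) (Fin n) ℝ)
    (hX₀ : X₀ ∈ Fset b A g V) (hV' : V'ᵀ * V' = X₀) :
    X₀ ∈ Fset b A g V' ∧
    (BddBelow {r : ℝ | ∃ X ∈ Fset b A g V', r = (C * X).trace} →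
      sInf {r : ℝ | ∃ X ∈ Fset b A g V', r = (C * X).trace} ≤ (C * X₀).trace) := by
  have hmem : X₀ ∈ Fset b A g V' := by
    refine ⟨hX₀.1, 1, memFW_one hp b, ?_⟩
    rw [mul_one, hV']
  exact ⟨hmem, fun h => csInf_le h ⟨X₀, hmem, rfl⟩⟩
end

section
/- (Theorem 2: strictly decreasing upper bounds.) Let n, m, p ∈ ℕ with p ≥ 2, b : Fin n → Fin p a block assignment map, C, A_1, …, A_m real symmetric n×n matrices and g ∈ ℝ^m. Suppose: (i) X_t is a real symmetric positive definite n×n matrix with ⟨A_i, X_t⟩ = g_i for all i; (ii) X★ is a positive semidefinite matrix with ⟨A_i, X★⟩ = g_i for all i and ⟨C, X★⟩ < ⟨C, X_t⟩; (iii) V' is a real n×n matrix with V'ᵀ V' = X_t. Then there exists λ ∈ (0,1) such that the matrix X̂ := (1−λ)·X_t + λ·X★ satisfies X̂ ∈ F(V') and ⟨C, X̂⟩ < ⟨C, X_t⟩. In particular, if X_t attains the inner-approximation value U^t at iteration t and X_t is positive definite with U^t > p★, then U^t > U^{t+1} ≥ p★. -/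
open Matrix Finset

set_option maxHeartbeats 1000000 in
lemma memFW_perturb {n p : ℕ} (hp : 2 ≤ p) (b : Fin n → Fin p)
    (S : Matrix (Fin n) (Fin n) ℝ) (hS : S.PosSemidef) (lam : ℝ)
    (hlam0 : 0 < lam) (hlam1 : lam < 1)
    (hlamK : lam * (∑ i, ∑ j, |S i j|) ≤ (1 - lam) / ((p : ℝ) - 1)) :
    ∃ Q : Fin p → Fin p → Matrix (Fin n) (Fin n) ℝ,
    (∀ k l : Fin p, k < l → (Q k l).PosSemidef) ∧
    (∀ k l : Fin p, k < l → ∀ i j : Fin n,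
      (b i ≠ k ∧ b i ≠ l) ∨ (b j ≠ k ∧ b j ≠ l) → Q k l i j = 0) ∧
    ((1 - lam) • (1 : Matrix (Fin n) (Fin n) ℝ) + lam • S)
      = ∑ k : Fin p, ∑ l ∈ Finset.Ioi k, Q k l := by
  set c1 : ℝ := (p : ℝ) - 1 with hc1def
  have hp2 : (2:ℝ) ≤ (p:ℝ) := by exact_mod_cast hp
  have hc1 : 1 ≤ c1 := by simp [hc1def]; linarith
  have hc1pos : 0 < c1 := by linarith
  obtain ⟨K, hKdef⟩ : ∃ K : ℝ, K = ∑ i, ∑ j, |S i j| := ⟨_, rfl⟩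
  rw [← hKdef] at hlamK
  have hSsymm : ∀ i j, S j i = S i j := by
    intro i j
    have := congrFun (congrFun hS.1 i) j
    simpa [Matrix.conjTranspose_apply] using this
  set Q : Fin p → Fin p → Matrix (Fin n) (Fin n) ℝ := fun k l =>
    Matrix.of fun i j =>
      if (b i = k ∨ b i = l) ∧ (b j = k ∨ b j = l) then
        (1 - lam) / c1 * (if i = j then 1 else 0)
          + lam * ((if b i = b j then 1 / c1 else 1) * S i j)
      else 0 with hQdef
  refine ⟨Q, ?_, ?_, ?_⟩
  · -- PSD
    intro k l hkl
    refine Matrix.posSemidef_iff_dotProduct_mulVec.mpr ⟨?_, ?_⟩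
    · -- Hermitian
      ext i j
      simp only [Matrix.conjTranspose_apply, hQdef, Matrix.of_apply, star_trivial]
      rw [hSsymm i j]
      by_cases h1 : (b i = k ∨ b i = l) ∧ (b j = k ∨ b j = l)
      · rw [if_pos ⟨h1.2, h1.1⟩, if_pos h1]
        have e1 : (if j = i then (1:ℝ) else 0) = (if i = j then 1 else 0) :=
          if_congr eq_comm rfl rfl
        have e2 : (if b j = b i then 1 / c1 else 1) = (if b i = b j then 1 / c1 else 1) :=
          if_congr eq_comm rfl rfl
        rw [e1, e2]
      · rw [if_neg (by tauto), if_neg h1]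
    · intro x
      have expand : star x ⬝ᵥ (Q k l) *ᵥ x = ∑ i, ∑ j, (Q k l i j) * x i * x j := by
        simp only [star_trivial, dotProduct, mulVec, Finset.mul_sum]
        exact Finset.sum_congr rfl fun i _ => Finset.sum_congr rfl fun j _ => by ring
      obtain ⟨T, hTdef⟩ : ∃ T : ℝ, T = ∑ i, (if b i = k ∨ b i = l then x i ^ 2 else 0) :=
        ⟨_, rfl⟩
      have hT : 0 ≤ T := by
        rw [hTdef]; exact Finset.sum_nonneg fun i _ => by positivity
      have hTi : ∀ i, (b i = k ∨ b i = l) → x i ^ 2 ≤ T := by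
        intro i hi
        rw [hTdef]
        have := Finset.single_le_sum (f := fun i => (if b i = k ∨ b i = l then x i ^ 2 else 0))
          (fun t _ => by positivity) (Finset.mem_univ i)
        simpa [hi] using this
      have split : ∀ i j, Q k l i j * x i * x j =
          (if i = j then (if b i = k ∨ b i = l then (1-lam)/c1 * x i ^ 2 else 0) else 0)
          + (if (b i = k ∨ b i = l) ∧ (b j = k ∨ b j = l) then
              lam * ((if b i = b j then 1 / c1 else 1) * S i j) * x i * x j else 0) := by
        intro i j
        by_cases hij : i = j
        · subst hij
          by_cases hPi : b i = k ∨ b i = l <;> simp [hQdef, hPi] <;> ring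
        · by_cases hc : (b i = k ∨ b i = l) ∧ (b j = k ∨ b j = l) <;>
            simp [hQdef, hij, hc] <;> ring
      rw [expand]
      obtain ⟨E, hEdef⟩ : ∃ E : ℝ, E = ∑ i, ∑ j,
          (if (b i = k ∨ b i = l) ∧ (b j = k ∨ b j = l) then
              lam * ((if b i = b j then 1 / c1 else 1) * S i j) * x i * x j else 0) := ⟨_, rfl⟩
      have hsum : ∑ i, ∑ j, (Q k l i j) * x i * x j = (1-lam)/c1 * T + E := by
        rw [Finset.sum_congr rfl fun i _ => Finset.sum_congr rfl fun j _ => split i j]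
        rw [Finset.sum_congr rfl fun i (_ : i ∈ univ) => Finset.sum_add_distrib,
          Finset.sum_add_distrib, hEdef]
        congr 1
        have h1 : ∀ i : Fin n, ∑ j, (if i = j then (if b i = k ∨ b i = l then (1-lam)/c1 * x i ^ 2 else 0) else 0)
            = (if b i = k ∨ b i = l then (1-lam)/c1 * x i ^ 2 else 0) := by
          intro i
          rw [Finset.sum_ite_eq]
          simp
        rw [Finset.sum_congr rfl fun i _ => h1 i, hTdef, Finset.mul_sum]
        exact Finset.sum_congr rfl fun i _ => by split_ifs <;> ring
      rw [hsum]
      have hE : |E| ≤ lam * T * K := by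
        have step1 : |E| ≤ ∑ i, ∑ j, lam * T * |S i j| := by
          rw [hEdef]
          refine le_trans (Finset.abs_sum_le_sum_abs _ _) ?_
          refine Finset.sum_le_sum fun i _ => ?_
          refine le_trans (Finset.abs_sum_le_sum_abs _ _) ?_
          refine Finset.sum_le_sum fun j _ => ?_
          by_cases hc : (b i = k ∨ b i = l) ∧ (b j = k ∨ b j = l)
          · rw [if_pos hc]
            have hxij : |x i * x j| ≤ T := by
              have h1 := hTi i hc.1
              have h2 := hTi j hc.2
              have := abs_mul (x i) (x j)
              nlinarith [sq_nonneg (|x i| - |x j|), sq_abs (x i), sq_abs (x j),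
                abs_nonneg (x i), abs_nonneg (x j)]
            have hcoef : |if b i = b j then 1 / c1 else 1| ≤ 1 := by
              split_ifs
              · rw [abs_of_nonneg (by positivity)]
                rw [div_le_one hc1pos]; linarith
              · simp
            calc |lam * ((if b i = b j then 1 / c1 else 1) * S i j) * x i * x j|
                = lam * (|if b i = b j then 1 / c1 else 1| * |S i j|) * |x i * x j| := by
                  rw [abs_mul, abs_mul, abs_mul, abs_mul, abs_of_pos hlam0, abs_mul]; ring
              _ ≤ lam * (1 * |S i j|) * T := by
                  apply mul_le_mul
                  · apply mul_le_mul_of_nonneg_left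
                    · exact mul_le_mul_of_nonneg_right hcoef (abs_nonneg _)
                    · exact hlam0.le
                  · exact hxij
                  · exact abs_nonneg _
                  · positivity
              _ = lam * T * |S i j| := by ring
          · rw [if_neg hc]
            simp only [abs_zero]
            positivity
        refine le_trans step1 (le_of_eq ?_)
        rw [hKdef, Finset.mul_sum]
        exact Finset.sum_congr rfl fun i _ => by rw [Finset.mul_sum]
      have hbound := mul_le_mul_of_nonneg_right hlamK hT
      have habs := neg_abs_le E
      nlinarith [hT]
  · -- support
    intro k l hkl i j hij
    simp only [hQdef, Matrix.of_apply]
    rw [if_neg]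
    tauto
  · -- sum identity
    ext i j
    simp only [Matrix.add_apply, Matrix.smul_apply, Matrix.one_apply, smul_eq_mul,
      Matrix.sum_apply]
    by_cases h : b i = b j
    · set v : ℝ := ((1 - lam) * (if i = j then 1 else 0) + lam * S i j) / c1 with hvdef
      have hcond : ∀ k l : Fin p,
          (((b i = k ∨ b i = l) ∧ (b j = k ∨ b j = l)) ↔ (b i = k ∨ b i = l)) := by
        intro k l
        rw [← h]
        tauto
      have hterm : ∀ k, ∀ l ∈ Finset.Ioi k, Q k l i j
          = (if b i = k then v else 0) + (if b i = l then v else 0) := by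
        intro k l hl
        have hkl : k < l := Finset.mem_Ioi.mp hl
        simp only [hQdef, Matrix.of_apply]
        by_cases h1 : b i = k
        · have h2 : b i ≠ l := by rw [h1]; exact hkl.ne
          rw [if_pos ((hcond k l).mpr (Or.inl h1)), if_pos h1, if_neg h2, if_pos h,
            add_zero, hvdef]
          ring
        · by_cases h2 : b i = l
          · rw [if_pos ((hcond k l).mpr (Or.inr h2)), if_pos h, if_neg h1, if_pos h2,
              zero_add, hvdef]
            ring
          · rw [if_neg (fun hc => by rcases (hcond k l).mp hc with h' | h'
                                     exacts [h1 h', h2 h']),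
              if_neg h1, if_neg h2, add_zero]
      rw [Finset.sum_congr rfl fun k _ => Finset.sum_congr rfl fun l hl => hterm k l hl]
      rw [Finset.sum_congr rfl fun k (_ : k ∈ univ) => Finset.sum_add_distrib,
        Finset.sum_add_distrib]
      have A1 : ∑ k : Fin p, ∑ l ∈ Finset.Ioi k, (if b i = k then v else 0)
          = ((Finset.Ioi (b i)).card : ℝ) * v := by
        have h1 : ∀ k : Fin p, ∑ l ∈ Finset.Ioi k, (if b i = k then v else 0)
            = (if b i = k then ((Finset.Ioi k).card : ℝ) * v else 0) := by
          intro k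
          rw [Finset.sum_const, nsmul_eq_mul]
          split_ifs <;> ring
        rw [Finset.sum_congr rfl fun k _ => h1 k, Finset.sum_ite_eq]
        simp
      have A2 : ∑ k : Fin p, ∑ l ∈ Finset.Ioi k, (if b i = l then v else 0)
          = ((Finset.Iio (b i)).card : ℝ) * v := by
        have h1 : ∀ k : Fin p, ∑ l ∈ Finset.Ioi k, (if b i = l then v else 0)
            = (if k ∈ Finset.Iio (b i) then v else 0) := by
          intro k
          rw [Finset.sum_ite_eq]
          simp [Finset.mem_Ioi, Finset.mem_Iio]
        rw [Finset.sum_congr rfl fun k _ => h1 k, Finset.sum_ite_mem,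
          Finset.univ_inter, Finset.sum_const, nsmul_eq_mul]
      rw [A1, A2, Fin.card_Ioi, Fin.card_Iio]
      have hcard : ((p - 1 - (b i : ℕ) : ℕ) : ℝ) + ((b i : ℕ) : ℝ) = c1 := by
        have hbi : (b i : ℕ) < p := (b i).isLt
        have he : (p - 1 - (b i : ℕ)) + (b i : ℕ) = p - 1 := by omega
        rw [← Nat.cast_add, he, hc1def, Nat.cast_sub (by omega), Nat.cast_one]
      have hfin : ((p - 1 - (b i : ℕ) : ℕ) : ℝ) * v + ((b i : ℕ) : ℝ) * v = c1 * v := by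
        rw [← add_mul, hcard]
      rw [hfin, hvdef, mul_div_cancel₀ _ (ne_of_gt hc1pos)]
    · have hij : i ≠ j := fun e => h (e ▸ rfl)
      set u : Fin p := min (b i) (b j) with hudef
      set w : Fin p := max (b i) (b j) with hwdef
      have huw : u < w := min_lt_max.mpr h
      have houter : ∀ k : Fin p, k ≠ u → ∑ l ∈ Finset.Ioi k, Q k l i j = 0 := by
        intro k hk
        refine Finset.sum_eq_zero fun l hl => ?_
        have hkl : k < l := Finset.mem_Ioi.mp hl
        simp only [hQdef, Matrix.of_apply]
        rw [if_neg]
        rintro ⟨hbi | hbi, hbj | hbj⟩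
        · exact h (hbi.trans hbj.symm)
        · exact hk (by rw [hudef, hbi, hbj, min_eq_left hkl.le])
        · exact hk (by rw [hudef, hbi, hbj, min_eq_right hkl.le])
        · exact h (hbi.trans hbj.symm)
      have hinner : ∀ l ∈ Finset.Ioi u, l ≠ w → Q u l i j = 0 := by
        intro l hl hlw
        have hul : u < l := Finset.mem_Ioi.mp hl
        simp only [hQdef, Matrix.of_apply]
        rw [if_neg]
        rintro ⟨hbi | hbi, hbj | hbj⟩
        · exact h (hbi.trans hbj.symm)
        · exact hlw (by rw [hwdef, hbi, hbj, max_eq_right hul.le])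
        · exact hlw (by rw [hwdef, hbi, hbj, max_eq_left hul.le])
        · exact h (hbi.trans hbj.symm)
      have hQuw : Q u w i j = lam * S i j := by
        have hmem : (b i = u ∨ b i = w) ∧ (b j = u ∨ b j = w) := by
          rcases le_total (b i) (b j) with hle | hle
          · exact ⟨Or.inl (by rw [hudef, min_eq_left hle]),
              Or.inr (by rw [hwdef, max_eq_right hle])⟩
          · exact ⟨Or.inr (by rw [hwdef, max_eq_left hle]),
              Or.inl (by rw [hudef, min_eq_right hle])⟩
        simp only [hQdef, Matrix.of_apply]
        rw [if_pos hmem, if_neg hij, if_neg h]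
        ring
      rw [Finset.sum_eq_single u (fun k _ hk => houter k hk)
          (fun hu => absurd (Finset.mem_univ u) hu),
        Finset.sum_eq_single_of_mem w (Finset.mem_Ioi.mpr huw) hinner, hQuw]
      simp [hij]

theorem inner_approx_strict_decrease {n m p : ℕ} (hp : 2 ≤ p) (b : Fin n → Fin p)
    (C : Matrix (Fin n) (Fin n) ℝ) (A : Fin m → Matrix (Fin n) (Fin n) ℝ)
    (g : Fin m → ℝ) (hC : C.IsSymm) (hAs : ∀ i, (A i).IsSymm)
    (Xt Xstar V' : Matrix (Fin n) (Fin n) ℝ)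
    (hXt : Xt.PosDef) (hXtfeas : ∀ i : Fin m, (A i * Xt).trace = g i)
    (hXstar : Xstar.PosSemidef) (hXsfeas : ∀ i : Fin m, (A i * Xstar).trace = g i)
    (hlt : (C * Xstar).trace < (C * Xt).trace)
    (hV' : V'ᵀ * V' = Xt) :
    ∃ lam : ℝ, lam ∈ Set.Ioo (0 : ℝ) 1 ∧
      ((1 - lam) • Xt + lam • Xstar) ∈ Fset b A g V' ∧
      (C * ((1 - lam) • Xt + lam • Xstar)).trace < (C * Xt).trace := by
  -- V' is invertible
  have hdet2 : V'.det * V'.det = Xt.det := by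
    rw [← hV', Matrix.det_mul, Matrix.det_transpose]
  have hdet : IsUnit V'.det := by
    rw [isUnit_iff_ne_zero]
    intro h0
    have := hXt.det_pos
    rw [← hdet2, h0, mul_zero] at this
    exact lt_irrefl _ this
  have hWV : V'⁻¹ * V' = 1 := Matrix.nonsing_inv_mul _ hdet
  set S : Matrix (Fin n) (Fin n) ℝ := (V'⁻¹)ᵀ * Xstar * V'⁻¹ with hSdef
  have hSpsd : S.PosSemidef := by
    have h := hXstar.conjTranspose_mul_mul_same (V'⁻¹)
    have he : (V'⁻¹)ᴴ = (V'⁻¹)ᵀ := by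
      ext i j; simp [Matrix.conjTranspose_apply]
    rwa [he] at h
  have hback : V'ᵀ * S * V' = Xstar := by
    have h1 : V'ᵀ * (V'⁻¹)ᵀ = 1 := by
      rw [← Matrix.transpose_mul, hWV, Matrix.transpose_one]
    calc V'ᵀ * ((V'⁻¹)ᵀ * Xstar * V'⁻¹) * V'
        = (V'ᵀ * (V'⁻¹)ᵀ) * Xstar * (V'⁻¹ * V') := by
          simp only [Matrix.mul_assoc]
      _ = Xstar := by rw [h1, hWV, Matrix.one_mul, Matrix.mul_one]
  obtain ⟨K, hKdef⟩ : ∃ K : ℝ, K = ∑ i, ∑ j, |S i j| := ⟨_, rfl⟩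
  have hK : 0 ≤ K := by
    rw [hKdef]
    exact Finset.sum_nonneg fun i _ => Finset.sum_nonneg fun j _ => abs_nonneg _
  set c1 : ℝ := (p : ℝ) - 1 with hc1def
  have hp2 : (2:ℝ) ≤ (p:ℝ) := by exact_mod_cast hp
  have hc1 : 1 ≤ c1 := by simp [hc1def]; linarith
  have hc1pos : 0 < c1 := by linarith
  set lam : ℝ := 1 / (2 * c1 * (K + 1)) with hlamdef
  have hlam0 : 0 < lam := by
    rw [hlamdef]
    positivity
  have hlamhalf : lam ≤ 1 / 2 := by
    rw [hlamdef]
    have h2 : (2:ℝ) ≤ 2 * c1 * (K + 1) := by nlinarith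
    exact one_div_le_one_div_of_le (by norm_num) h2
  have hlam1 : lam < 1 := lt_of_le_of_lt hlamhalf (by norm_num)
  have he' : lam * (2 * c1 * (K + 1)) = 1 := by
    rw [hlamdef]
    field_simp
  have hlamK : lam * (∑ i, ∑ j, |S i j|) ≤ (1 - lam) / ((p:ℝ) - 1) := by
    rw [← hKdef]
    show lam * K ≤ (1 - lam) / c1
    rw [le_div_iff₀ hc1pos]
    nlinarith [mul_pos hlam0 hc1pos]
  obtain ⟨Q, hQpsd, hQsupp, hQsum⟩ := memFW_perturb hp b S hSpsd lam hlam0 hlam1 hlamK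
  refine ⟨lam, ⟨hlam0, hlam1⟩, ⟨?_, ?_⟩, ?_⟩
  · intro i
    rw [Matrix.mul_add, Matrix.trace_add, Matrix.mul_smul, Matrix.trace_smul,
      Matrix.mul_smul, Matrix.trace_smul, hXtfeas i, hXsfeas i, smul_eq_mul, smul_eq_mul]
    ring
  · refine ⟨(1 - lam) • (1 : Matrix (Fin n) (Fin n) ℝ) + lam • S,
      ⟨Q, hQpsd, hQsupp, hQsum⟩, ?_⟩
    rw [Matrix.mul_add, Matrix.add_mul, Matrix.mul_smul, Matrix.smul_mul,
      Matrix.mul_smul, Matrix.smul_mul, Matrix.mul_one, hV']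
    rw [← Matrix.mul_assoc] at hback ⊢
    rw [hback]
  · rw [Matrix.mul_add, Matrix.trace_add, Matrix.mul_smul, Matrix.trace_smul,
      Matrix.mul_smul, Matrix.trace_smul, smul_eq_mul, smul_eq_mul]
    nlinarith [hlam0, hlt]
end

section
/- (Theorem 3: strictly increasing lower bounds.) Let n, m, p ∈ ℕ with p ≥ 2, b : Fin n → Fin p a block assignment map, C, A_1, …, A_m real symmetric n×n matrices and g ∈ ℝ^m. Suppose: (i) y_t ∈ ℝ^m is such that Z_t := C − Σ_{i=1}^m (y_t)_i A_i is positive definite; (ii) y★ ∈ ℝ^m is such that C − Σ_{i=1}^m (y★)_i A_i is positive semidefinite and gᵀ y★ > gᵀ y_t; (iii) V' is a real n×n matrix with V'ᵀ V' = Z_t. Then there exists λ ∈ (0,1) such that ŷ := (1−λ)·y_t + λ·y★ satisfies ŷ ∈ D(V') and gᵀ ŷ > gᵀ y_t. In particular, if y_t attains the outer-approximation value L^t at iteration t with C − Σ_i (y_t)_i A_i positive definite and L^t < d★, then L^t < L^{t+1} ≤ d★. -/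
open Matrix Finset

/-- Dual inner-approximation feasible set at `V`:
`y` such that `C − ∑ i, y i • A i ∈ FW_b(V)`. -/
def Dset {n m p : ℕ} (b : Fin n → Fin p) (C : Matrix (Fin n) (Fin n) ℝ)
    (A : Fin m → Matrix (Fin n) (Fin n) ℝ)
    (V : Matrix (Fin n) (Fin n) ℝ) : Set (Fin m → ℝ) :=
  {y | memFWV b V (C - ∑ i : Fin m, y i • A i)}


lemma count_same {p : ℕ} (hp : 2 ≤ p) (r : Fin p) :
    ∑ k : Fin p, ∑ l ∈ Finset.Ioi k, (if r = k ∨ r = l then (1:ℝ) else 0) = (p:ℝ) - 1 := by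
  have h1 : ∀ k : Fin p, ∀ l ∈ Finset.Ioi k, (if r = k ∨ r = l then (1:ℝ) else 0)
      = (if r = k then (1:ℝ) else 0) + (if r = l then (1:ℝ) else 0) := by
    intro k l hl
    have hkl : k < l := Finset.mem_Ioi.mp hl
    by_cases h2 : r = k <;> by_cases h3 : r = l <;>
      simp_all <;> exact absurd (h2 ▸ h3 ▸ hkl) (lt_irrefl _)
  calc ∑ k : Fin p, ∑ l ∈ Finset.Ioi k, (if r = k ∨ r = l then (1:ℝ) else 0)
      = ∑ k : Fin p, (∑ _l ∈ Finset.Ioi k, (if r = k then (1:ℝ) else 0)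
          + ∑ l ∈ Finset.Ioi k, (if r = l then (1:ℝ) else 0)) := by
        refine Finset.sum_congr rfl fun k _ => ?_
        rw [← Finset.sum_add_distrib]
        exact Finset.sum_congr rfl (h1 k)
    _ = (p:ℝ) - 1 := by
        rw [Finset.sum_add_distrib]
        have e1 : ∑ k : Fin p, ∑ _l ∈ Finset.Ioi k, (if r = k then (1:ℝ) else 0)
            = ((Finset.Ioi r).card : ℝ) := by
          rw [Finset.sum_eq_single r]
          · simp
          · intro k _ hk; simp [Ne.symm hk]
          · simp
        have e2 : ∑ k : Fin p, ∑ l ∈ Finset.Ioi k, (if r = l then (1:ℝ) else 0)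
            = ((Finset.Iio r).card : ℝ) := by
          have h3 : ∀ k : Fin p, ∑ l ∈ Finset.Ioi k, (if r = l then (1:ℝ) else 0)
              = if k < r then 1 else 0 := by
            intro k
            rw [Finset.sum_ite_eq (Finset.Ioi k) r (fun _ => (1:ℝ))]
            simp [Finset.mem_Ioi]
          rw [Finset.sum_congr rfl (fun k _ => h3 k), Finset.sum_boole]
          congr 1
          congr 1
          ext k
          simp [Finset.mem_Iio]
        rw [e1, e2, Fin.card_Ioi, Fin.card_Iio]
        have hr := r.2
        have h4 : (r:ℕ) ≤ p - 1 := by omega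
        rw [Nat.cast_sub h4]
        rw [Nat.cast_sub (by omega : 1 ≤ p)]
        push_cast
        ring


lemma sum_pair_ind {p : ℕ} (k0 l0 : Fin p) (h : k0 < l0) :
    ∑ k : Fin p, ∑ l ∈ Finset.Ioi k, (if k = k0 ∧ l = l0 then (1:ℝ) else 0) = 1 := by
  rw [Finset.sum_eq_single k0]
  · have : ∀ l ∈ Finset.Ioi k0, (if k0 = k0 ∧ l = l0 then (1:ℝ) else 0)
        = (if l = l0 then (1:ℝ) else 0) := by intro l _; simp
    rw [Finset.sum_congr rfl this, Finset.sum_ite_eq' (Finset.Ioi k0) l0 (fun _ => (1:ℝ))]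
    simp [Finset.mem_Ioi, h]
  · intro k _ hk
    apply Finset.sum_eq_zero
    intro l _
    simp [hk]
  · simp

lemma count_diff {p : ℕ} (r s : Fin p) (h : r ≠ s) :
    ∑ k : Fin p, ∑ l ∈ Finset.Ioi k, (if (r = k ∨ r = l) ∧ (s = k ∨ s = l) then (1:ℝ) else 0) = 1 := by
  have key : ∀ (k0 l0 : Fin p), k0 < l0 → ({k0, l0} : Set (Fin p)) = {r, s} →
      ∑ k : Fin p, ∑ l ∈ Finset.Ioi k, (if (r = k ∨ r = l) ∧ (s = k ∨ s = l) then (1:ℝ) else 0) = 1 := by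
    intro k0 l0 hlt hset
    have hcong : ∀ k : Fin p, ∀ l ∈ Finset.Ioi k,
        (if (r = k ∨ r = l) ∧ (s = k ∨ s = l) then (1:ℝ) else 0)
        = (if k = k0 ∧ l = l0 then (1:ℝ) else 0) := by
      intro k l hl
      have hkl : k < l := Finset.mem_Ioi.mp hl
      have h1 : r = k0 ∨ r = l0 := by
        have : r ∈ ({k0, l0} : Set (Fin p)) := by rw [hset]; left; rfl
        simpa using this
      have h2 : s = k0 ∨ s = l0 := by
        have : s ∈ ({k0, l0} : Set (Fin p)) := by rw [hset]; right; rfl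
        simpa using this
      congr 1
      simp only [eq_iff_iff]
      rw [Fin.lt_def] at hkl hlt
      simp only [Fin.ext_iff] at h1 h2 h ⊢
      omega
    rw [Finset.sum_congr rfl (fun k _ => Finset.sum_congr rfl (hcong k))]
    exact sum_pair_ind k0 l0 hlt
  rcases lt_or_gt_of_ne h with h' | h'
  · exact key r s h' rfl
  · exact key s r h' (by ext x; simp [or_comm])

lemma memFW_perturb_s14 {n p : ℕ} (hp : 2 ≤ p) (b : Fin n → Fin p)
    (W : Matrix (Fin n) (Fin n) ℝ) (hW : ∀ i j, W i j = W j i) (lam : ℝ)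
    (hlam0 : 0 < lam) (hlam1 : lam ≤ 1)
    (hbound : lam * (((p:ℝ) - 1) * (∑ i, ∑ j, |W i j|)) ≤ 1 - lam) :
    memFW b ((1 - lam) • (1 : Matrix (Fin n) (Fin n) ℝ) + lam • W) := by
  have hp2 : (2:ℝ) ≤ (p:ℝ) := by exact_mod_cast hp
  have hp1 : (0:ℝ) < (p:ℝ) - 1 := by linarith
  set M₀ : ℝ := ∑ i, ∑ j, |W i j| with hM₀
  have hM₀0 : 0 ≤ M₀ := by
    apply Finset.sum_nonneg; intro i _; apply Finset.sum_nonneg; intro j _; exact abs_nonneg _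
  set q : Fin n → Fin n → ℝ := fun i j =>
    if b i = b j then ((1 - lam) * (if i = j then (1:ℝ) else 0) + lam * W i j) / ((p:ℝ) - 1)
    else lam * W i j with hq
  have hqsym : ∀ i j, q i j = q j i := by
    intro i j
    simp only [hq]
    by_cases h1 : b i = b j
    · rw [if_pos h1, if_pos h1.symm, hW i j]
      by_cases h2 : i = j
      · simp [h2]
      · simp [h2, Ne.symm h2]
    · rw [if_neg h1, if_neg (fun h : b j = b i => h1 h.symm), hW i j]
  set QQ : Fin p → Fin p → Matrix (Fin n) (Fin n) ℝ := fun k l =>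
    Matrix.of fun i j => if (b i = k ∨ b i = l) ∧ (b j = k ∨ b j = l) then q i j else 0 with hQQ
  refine ⟨QQ, ?_, ?_, ?_⟩
  · -- PSD
    intro k l hkl
    refine Matrix.PosSemidef.of_dotProduct_mulVec_nonneg ?_ ?_
    · -- Hermitian
      ext i j
      simp only [Matrix.conjTranspose_apply, star_trivial, hQQ, Matrix.of_apply]
      by_cases hc : (b i = k ∨ b i = l) ∧ (b j = k ∨ b j = l)
      · rw [if_pos ⟨hc.2, hc.1⟩, if_pos hc, hqsym j i]
      · rw [if_neg (fun h => hc ⟨h.2, h.1⟩), if_neg hc]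
    · intro x
      simp only [star_trivial]
      set s : Finset (Fin n) := Finset.univ.filter (fun i => b i = k ∨ b i = l) with hs
      have hmem : ∀ i, i ∈ s ↔ (b i = k ∨ b i = l) := by
        intro i; simp [hs]
      set X : ℝ := ∑ i ∈ s, (x i)^2 with hX
      have hX0 : 0 ≤ X := Finset.sum_nonneg fun i _ => sq_nonneg _
      have hxsq : ∀ i ∈ s, (x i)^2 ≤ X :=
        fun i hi => Finset.single_le_sum (fun j _ => sq_nonneg (x j)) hi
      -- expand quadratic form
      have hQQ0 : ∀ i j : Fin n, ¬(b i = k ∨ b i = l) ∨ ¬(b j = k ∨ b j = l) →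
          QQ k l i j = 0 := by
        intro i j h
        simp only [hQQ, Matrix.of_apply]
        rw [if_neg]
        rintro ⟨ha, hb'⟩
        tauto
      have hQQval : ∀ i ∈ s, ∀ j ∈ s, QQ k l i j = q i j := by
        intro i hi j hj
        simp only [hQQ, Matrix.of_apply]
        rw [if_pos ⟨(hmem i).mp hi, (hmem j).mp hj⟩]
      have expand : x ⬝ᵥ (QQ k l) *ᵥ x = ∑ i ∈ s, ∑ j ∈ s, x i * (q i j * x j) := by
        have e1 : x ⬝ᵥ (QQ k l) *ᵥ x = ∑ i, ∑ j, x i * ((QQ k l) i j * x j) := by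
          simp [dotProduct, Matrix.mulVec, Finset.mul_sum]
        have inner : ∀ i : Fin n, ∑ j, x i * ((QQ k l) i j * x j)
            = ∑ j ∈ s, x i * ((QQ k l) i j * x j) := by
          intro i
          symm
          apply Finset.sum_subset (Finset.subset_univ s)
          intro j _ hj
          rw [hQQ0 i j (Or.inr (fun h => hj ((hmem j).mpr h)))]
          ring
        have outer : ∑ i, ∑ j ∈ s, x i * ((QQ k l) i j * x j)
            = ∑ i ∈ s, ∑ j ∈ s, x i * ((QQ k l) i j * x j) := by
          symm
          apply Finset.sum_subset (Finset.subset_univ s)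
          intro i _ hi
          apply Finset.sum_eq_zero
          intro j _
          rw [hQQ0 i j (Or.inl (fun h => hi ((hmem i).mpr h)))]
          ring
        rw [e1, Finset.sum_congr rfl (fun i _ => inner i), outer]
        exact Finset.sum_congr rfl fun i hi => Finset.sum_congr rfl fun j hj => by
          rw [hQQval i hi j hj]
      set cc : Fin n → Fin n → ℝ := fun i j => if b i = b j then 1/((p:ℝ)-1) else 1 with hcc
      have hsplit : ∀ i j : Fin n, x i * (q i j * x j)
          = (1 - lam)/((p:ℝ)-1) * (if i = j then (x i)^2 else 0)
            + lam * (cc i j * W i j * (x i * x j)) := by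
        intro i j
        by_cases hij : i = j
        · subst hij
          simp only [hq, hcc, if_pos rfl, if_pos (rfl : b i = b i)]
          field_simp
          simp only [if_true]
          ring
        · by_cases hbij : b i = b j
          · simp only [hq, hcc, if_pos hbij, if_neg hij]
            field_simp
            ring
          · simp only [hq, hcc, if_neg hbij, if_neg hij]
            ring
      set T : ℝ := ∑ i ∈ s, ∑ j ∈ s, (cc i j * W i j * (x i * x j)) with hT
      have hdiag : ∑ i ∈ s, ∑ j ∈ s, ((1 - lam)/((p:ℝ)-1) * (if i = j then (x i)^2 else 0))
          = (1-lam)/((p:ℝ)-1) * X := by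
        rw [hX, Finset.mul_sum]
        refine Finset.sum_congr rfl fun i hi => ?_
        rw [← Finset.mul_sum, Finset.sum_ite_eq s i (fun _ => (x i)^2), if_pos hi]
      have hsum : x ⬝ᵥ (QQ k l) *ᵥ x = (1-lam)/((p:ℝ)-1) * X + lam * T := by
        rw [expand]
        simp_rw [hsplit]
        rw [← hdiag, hT, Finset.mul_sum, ← Finset.sum_add_distrib]
        refine Finset.sum_congr rfl fun i _ => ?_
        rw [Finset.mul_sum, ← Finset.sum_add_distrib]
      have hWle : ∑ i ∈ s, ∑ j ∈ s, |W i j| ≤ M₀ := by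
        rw [hM₀]
        refine le_trans (Finset.sum_le_sum fun i _ => ?_)
          (Finset.sum_le_sum_of_subset_of_nonneg (Finset.subset_univ s) fun i _ _ => ?_)
        · exact Finset.sum_le_sum_of_subset_of_nonneg (Finset.subset_univ s)
            (fun j _ _ => abs_nonneg _)
        · exact Finset.sum_nonneg fun j _ => abs_nonneg _
      have hTbound : |T| ≤ M₀ * X := by
        have step1 : |T| ≤ ∑ i ∈ s, ∑ j ∈ s, |cc i j * W i j * (x i * x j)| := by
          refine le_trans (Finset.abs_sum_le_sum_abs _ _) ?_
          exact Finset.sum_le_sum fun i _ => Finset.abs_sum_le_sum_abs _ _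
        have step2 : ∀ i ∈ s, ∀ j ∈ s, |cc i j * W i j * (x i * x j)| ≤ |W i j| * X := by
          intro i hi j hj
          have hccle : |cc i j| ≤ 1 := by
            simp only [hcc]
            by_cases hb2 : b i = b j
            · rw [if_pos hb2, abs_of_pos (by positivity), div_le_one hp1]
              linarith [hp2]
            · rw [if_neg hb2, abs_one]
          have hxx : |x i * x j| ≤ X := by
            have h1 := hxsq i hi
            have h2 := hxsq j hj
            rw [abs_mul]
            nlinarith [sq_abs (x i), sq_abs (x j), sq_nonneg (|x i| - |x j|),
              abs_nonneg (x i), abs_nonneg (x j)]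
          calc |cc i j * W i j * (x i * x j)| = |cc i j| * |W i j| * |x i * x j| := by
                rw [abs_mul, abs_mul]
            _ ≤ 1 * |W i j| * X :=
                mul_le_mul (mul_le_mul_of_nonneg_right hccle (abs_nonneg _)) hxx
                  (abs_nonneg _) (by positivity)
            _ = |W i j| * X := by ring
        have step3 : ∑ i ∈ s, ∑ j ∈ s, (|W i j| * X) = (∑ i ∈ s, ∑ j ∈ s, |W i j|) * X := by
          rw [Finset.sum_mul]
          exact Finset.sum_congr rfl fun i _ => (Finset.sum_mul _ _ _).symm
        calc |T| ≤ ∑ i ∈ s, ∑ j ∈ s, |cc i j * W i j * (x i * x j)| := step1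
          _ ≤ ∑ i ∈ s, ∑ j ∈ s, (|W i j| * X) :=
              Finset.sum_le_sum fun i hi => Finset.sum_le_sum fun j hj => step2 i hi j hj
          _ = (∑ i ∈ s, ∑ j ∈ s, |W i j|) * X := step3
          _ ≤ M₀ * X := mul_le_mul_of_nonneg_right hWle hX0
      rw [hsum]
      have h1 : lam * M₀ * X ≤ (1-lam)/((p:ℝ)-1) * X := by
        apply mul_le_mul_of_nonneg_right ?_ hX0
        rw [le_div_iff₀ hp1]
        nlinarith [hbound]
      have h2 : -(M₀ * X) ≤ T := neg_le_of_abs_le hTbound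
      have h3 : lam * -(M₀ * X) ≤ lam * T := mul_le_mul_of_nonneg_left h2 hlam0.le
      nlinarith [h1, h3]
  · -- zero pattern
    intro k l hkl i j hij
    rw [hQQ]; simp only [Matrix.of_apply]
    rw [if_neg]
    rintro ⟨ha, hb'⟩
    rcases hij with ⟨h1, h2⟩ | ⟨h1, h2⟩
    · rcases ha with h | h <;> [exact h1 h; exact h2 h]
    · rcases hb' with h | h <;> [exact h1 h; exact h2 h]
  · -- sum identity
    ext i j
    simp only [Matrix.sum_apply, hQQ, Matrix.of_apply, Matrix.add_apply, Matrix.smul_apply,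
      Matrix.one_apply, smul_eq_mul]
    have hfac : ∀ k l : Fin p, (if (b i = k ∨ b i = l) ∧ (b j = k ∨ b j = l) then q i j else 0)
        = q i j * (if (b i = k ∨ b i = l) ∧ (b j = k ∨ b j = l) then (1:ℝ) else 0) := by
      intro k l; rw [mul_ite, mul_one, mul_zero]
    simp_rw [hfac, ← Finset.mul_sum]
    by_cases hb' : b i = b j
    · have : ∀ k l : Fin p, ((b i = k ∨ b i = l) ∧ (b j = k ∨ b j = l)) = (b i = k ∨ b i = l) := by
        intro k l; rw [← hb']; simp
      simp_rw [this]
      rw [count_same hp (b i)]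
      simp only [hq]
      rw [if_pos hb', div_mul_cancel₀ _ (ne_of_gt hp1)]
    · have hij : i ≠ j := fun h => hb' (h ▸ rfl)
      rw [count_diff (b i) (b j) hb']
      simp only [hq]
      rw [if_neg hb']
      simp [hij]

theorem outer_approx_strict_increase {n m p : ℕ} (hp : 2 ≤ p) (b : Fin n → Fin p)
    (C : Matrix (Fin n) (Fin n) ℝ) (A : Fin m → Matrix (Fin n) (Fin n) ℝ)
    (g : Fin m → ℝ) (hC : C.IsSymm) (hAs : ∀ i, (A i).IsSymm)
    (yt ystar : Fin m → ℝ) (V' : Matrix (Fin n) (Fin n) ℝ)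
    (hZt : (C - ∑ i : Fin m, yt i • A i).PosDef)
    (hystar : (C - ∑ i : Fin m, ystar i • A i).PosSemidef)
    (hgt : g ⬝ᵥ yt < g ⬝ᵥ ystar)
    (hV' : V'ᵀ * V' = C - ∑ i : Fin m, yt i • A i) :
    ∃ lam : ℝ, lam ∈ Set.Ioo (0 : ℝ) 1 ∧
      ((1 - lam) • yt + lam • ystar) ∈ Dset b C A V' ∧
      g ⬝ᵥ yt < g ⬝ᵥ ((1 - lam) • yt + lam • ystar) := by
  have hp2 : (2:ℝ) ≤ (p:ℝ) := by exact_mod_cast hp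
  set Zs : Matrix (Fin n) (Fin n) ℝ := C - ∑ i : Fin m, ystar i • A i with hZs
  -- V' is invertible
  have hdet : IsUnit V'.det := by
    have hd : 0 < (C - ∑ i : Fin m, yt i • A i).det := hZt.det_pos
    rw [← hV', Matrix.det_mul, Matrix.det_transpose] at hd
    exact isUnit_iff_ne_zero.mpr (fun h => by rw [h, mul_zero] at hd; exact lt_irrefl _ hd)
  have hdetT : IsUnit V'ᵀ.det := by rwa [Matrix.det_transpose]
  set W : Matrix (Fin n) (Fin n) ℝ := (V'ᵀ)⁻¹ * Zs * V'⁻¹ with hW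
  -- W is symmetric
  have hZsT : Zsᵀ = Zs := hystar.1
  have hWT : Wᵀ = W := by
    rw [hW, Matrix.transpose_mul, Matrix.transpose_mul, Matrix.transpose_nonsing_inv,
      Matrix.transpose_nonsing_inv, Matrix.transpose_transpose, hZsT, Matrix.mul_assoc]
  have hWsym : ∀ i j, W i j = W j i := by
    intro i j
    conv_rhs => rw [← hWT]
    rfl
  -- V'ᵀ * W * V' = Zs
  have hVWV : V'ᵀ * W * V' = Zs := by
    rw [hW]
    rw [Matrix.mul_assoc ((V'ᵀ)⁻¹) Zs (V'⁻¹), ← Matrix.mul_assoc V'ᵀ ((V'ᵀ)⁻¹) _,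
      Matrix.mul_nonsing_inv _ hdetT, Matrix.one_mul, Matrix.mul_assoc Zs _ _,
      Matrix.nonsing_inv_mul _ hdet, Matrix.mul_one]
  set M₀ : ℝ := ∑ i, ∑ j, |W i j| with hM₀
  have hM₀0 : 0 ≤ M₀ :=
    Finset.sum_nonneg fun i _ => Finset.sum_nonneg fun j _ => abs_nonneg _
  set lam : ℝ := 1 / (2 * (1 + ((p:ℝ) - 1) * M₀)) with hlam
  have hden : 0 < 2 * (1 + ((p:ℝ) - 1) * M₀) := by nlinarith
  have hlam0 : 0 < lam := by rw [hlam]; positivity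
  have hlamhalf : lam ≤ 1/2 := by
    rw [hlam, div_le_div_iff₀ hden (by norm_num)]
    nlinarith
  have hlam1 : lam < 1 := by linarith
  have hbound : lam * (((p:ℝ) - 1) * M₀) ≤ 1 - lam := by
    have : lam * (2 * (1 + ((p:ℝ) - 1) * M₀)) = 1 := by
      rw [hlam]; field_simp
      exact div_self (by linarith : (0:ℝ) < 1 + ((p:ℝ) - 1) * M₀).ne'
    nlinarith
  refine ⟨lam, ⟨hlam0, hlam1⟩, ?_, ?_⟩
  · -- membership in Dset
    refine ⟨(1 - lam) • (1 : Matrix (Fin n) (Fin n) ℝ) + lam • W,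
      memFW_perturb_s14 hp b W hWsym lam hlam0 hlam1.le hbound, ?_⟩
    have hsum : ∑ i : Fin m, ((1 - lam) • yt + lam • ystar) i • A i
        = (1 - lam) • (∑ i : Fin m, yt i • A i) + lam • (∑ i : Fin m, ystar i • A i) := by
      rw [Finset.smul_sum, Finset.smul_sum, ← Finset.sum_add_distrib]
      refine Finset.sum_congr rfl fun i _ => ?_
      simp [add_smul, smul_smul]
    have hrhs : V'ᵀ * ((1 - lam) • (1 : Matrix (Fin n) (Fin n) ℝ) + lam • W) * V'
        = (1 - lam) • (V'ᵀ * V') + lam • (V'ᵀ * W * V') := by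
      rw [Matrix.mul_add, Matrix.add_mul]
      congr 1 <;> rw [Matrix.mul_smul, Matrix.smul_mul] <;> rw [Matrix.mul_one]
    rw [hrhs, hVWV, hV', hsum, hZs]
    module
  · -- strict increase of objective
    have : g ⬝ᵥ ((1 - lam) • yt + lam • ystar)
        = (1 - lam) * (g ⬝ᵥ yt) + lam * (g ⬝ᵥ ystar) := by
      rw [dotProduct_add, dotProduct_smul, dotProduct_smul, smul_eq_mul, smul_eq_mul]
    rw [this]
    nlinarith [mul_pos hlam0 (sub_pos.mpr hgt)]
end
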